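/- arXiv:2003.04461 — 6 statements merged into one kernel-verified Lean document; each statement's English description precedes it below -/
import Mathlib

section
/- Let m ≥ 1, let 𝟙 ∈ ℝ^m be the all-ones vector, and let ū ∈ ∏_i (u̲_i, ū_i). Then the following are equivalent: (i) ū is the unique minimizer of the resource allocation problem; (ii) there exists η̄ ∈ span(𝟙) such that 0 = (1/β) K 𝟙 (𝟙ᵀū − d) + L η̄ and J_i'(ū_i) = η̄_i for every i. Moreover, when (ii) holds the vector η̄ is unique. (Paper's Lemma 1, with the conjugate-gradient relation ū = ∇J*(η̄) written equivalently as ∇J(ū) = η̄.) -/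
open Filter Matrix Polynomial

lemma dapi_mem_interval_of_Icc {lo hi : EReal} {a b z : ℝ}
    (ha : lo < (a:EReal)) (hb : (b:EReal) < hi) (hz : z ∈ Set.Icc a b) :
    lo < (z:EReal) ∧ (z:EReal) < hi :=
  ⟨lt_of_lt_of_le ha (EReal.coe_le_coe_iff.mpr hz.1),
   lt_of_le_of_lt (EReal.coe_le_coe_iff.mpr hz.2) hb⟩

lemma dapi_strict_grad_ineq {lo hi : EReal} {J J' : ℝ → ℝ} {μ : ℝ} (hμ : 0 < μ)
    (hderiv : ∀ x : ℝ, lo < (x:EReal) → (x:EReal) < hi → HasDerivAt J (J' x) x)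
    (hconv : ∀ x y : ℝ, lo < (x:EReal) → (x:EReal) < hi → lo < (y:EReal) → (y:EReal) < hi →
      μ * (x - y) ^ 2 ≤ (J' x - J' y) * (x - y))
    {x y : ℝ} (hx1 : lo < (x:EReal)) (hx2 : (x:EReal) < hi)
    (hy1 : lo < (y:EReal)) (hy2 : (y:EReal) < hi) (hxy : x ≠ y) :
    J' x * (y - x) < J y - J x := by
  have mono : ∀ a b : ℝ, lo < (a:EReal) → (a:EReal) < hi → lo < (b:EReal) → (b:EReal) < hi →
      a < b → J' a < J' b := by
    intro a b ha1 ha2 hb1 hb2 hab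
    have h := hconv b a hb1 hb2 ha1 ha2
    have h2 : 0 < (b - a) ^ 2 := pow_pos (sub_pos.mpr hab) 2
    nlinarith
  rcases lt_or_gt_of_ne hxy with h | h
  · have hcont : ContinuousOn J (Set.Icc x y) := fun z hz =>
      ((hderiv z (dapi_mem_interval_of_Icc hx1 hy2 hz).1
        (dapi_mem_interval_of_Icc hx1 hy2 hz).2).continuousAt).continuousWithinAt
    obtain ⟨c, hc, hceq⟩ := exists_hasDerivAt_eq_slope J J' h hcont (fun z hz =>
      hderiv z (dapi_mem_interval_of_Icc hx1 hy2 (Set.mem_Icc_of_Ioo hz)).1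
        (dapi_mem_interval_of_Icc hx1 hy2 (Set.mem_Icc_of_Ioo hz)).2)
    have hcmem := dapi_mem_interval_of_Icc hx1 hy2 (Set.mem_Icc_of_Ioo hc)
    have : J' x < J' c := mono x c hx1 hx2 hcmem.1 hcmem.2 hc.1
    have hJy : J y - J x = J' c * (y - x) :=
      ((div_eq_iff (by intro h0; apply hxy; linarith : y - x ≠ 0)).mp hceq.symm)
    nlinarith
  · have hcont : ContinuousOn J (Set.Icc y x) := fun z hz =>
      ((hderiv z (dapi_mem_interval_of_Icc hy1 hx2 hz).1
        (dapi_mem_interval_of_Icc hy1 hx2 hz).2).continuousAt).continuousWithinAt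
    obtain ⟨c, hc, hceq⟩ := exists_hasDerivAt_eq_slope J J' h hcont (fun z hz =>
      hderiv z (dapi_mem_interval_of_Icc hy1 hx2 (Set.mem_Icc_of_Ioo hz)).1
        (dapi_mem_interval_of_Icc hy1 hx2 (Set.mem_Icc_of_Ioo hz)).2)
    have hcmem := dapi_mem_interval_of_Icc hy1 hx2 (Set.mem_Icc_of_Ioo hc)
    have : J' c < J' x := mono c x hcmem.1 hcmem.2 hx1 hx2 hc.2
    have hJy : J x - J y = J' c * (x - y) :=
      ((div_eq_iff (by intro h0; apply hxy; linarith : x - y ≠ 0)).mp hceq.symm)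
    nlinarith

lemma dapi_exists_room {lo hi : EReal} {u : ℝ} (h1 : lo < (u:EReal)) (h2 : (u:EReal) < hi) :
    ∃ ε > (0:ℝ), ∀ t : ℝ, |t| < ε →
      lo < ((u + t : ℝ):EReal) ∧ ((u + t : ℝ):EReal) < hi := by
  obtain ⟨r, hr1, hr2⟩ := EReal.lt_iff_exists_real_btwn.mp h1
  obtain ⟨s, hs1, hs2⟩ := EReal.lt_iff_exists_real_btwn.mp h2
  have hru : r < u := EReal.coe_lt_coe_iff.mp hr2
  have hus : u < s := EReal.coe_lt_coe_iff.mp hs1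
  refine ⟨min (u - r) (s - u), lt_min (by linarith) (by linarith), ?_⟩
  intro t ht
  obtain ⟨ht1, ht2⟩ := abs_lt.mp ht
  have hA : min (u - r) (s - u) ≤ u - r := min_le_left _ _
  have hB : min (u - r) (s - u) ≤ s - u := min_le_right _ _
  constructor
  · exact lt_trans hr1 (EReal.coe_lt_coe_iff.mpr (by linarith))
  · exact lt_trans (EReal.coe_lt_coe_iff.mpr (by linarith)) hs2

/-- Paper's Lemma 1 (Distributed Optimality Conditions): `ū` is the unique minimizer of the
resource allocation problem iff there is a (unique) `η̄ ∈ span 𝟙` with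
`0 = (1/β) K 𝟙 (𝟙ᵀū − d) + L η̄` and `∇J(ū) = η̄`. -/
theorem dapi_distributed_optimality_conditions
    (m : ℕ) (hm : 1 ≤ m)
    (lo hi : Fin m → EReal) (hlohi : ∀ i, lo i < hi i)
    (J J' : Fin m → ℝ → ℝ) (μ : Fin m → ℝ) (hμ : ∀ i, 0 < μ i)
    (hderiv : ∀ i, ∀ x : ℝ, lo i < (x : EReal) → (x : EReal) < hi i →
      HasDerivAt (J i) (J' i x) x)
    (hJ'cont : ∀ i, ContinuousOn (J' i) {x : ℝ | lo i < (x : EReal) ∧ (x : EReal) < hi i})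
    (hconv : ∀ i, ∀ x y : ℝ, lo i < (x : EReal) → (x : EReal) < hi i →
      lo i < (y : EReal) → (y : EReal) < hi i →
      μ i * (x - y) ^ 2 ≤ (J' i x - J' i y) * (x - y))
    (hbarrier_lo : ∀ i, ∀ a : ℝ, lo i = (a : EReal) →
      Tendsto (J i) (nhdsWithin a (Set.Ioi a)) atTop)
    (hbarrier_hi : ∀ i, ∀ b : ℝ, hi i = (b : EReal) →
      Tendsto (J i) (nhdsWithin b (Set.Iio b)) atTop)
    (d : ℝ)
    (hfeas : ∃ u : Fin m → ℝ,
      (∀ i, lo i < (u i : EReal) ∧ (u i : EReal) < hi i) ∧ ∑ i, u i = d)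
    (L : Matrix (Fin m) (Fin m) ℝ)
    (hL1 : L.mulVec (fun _ => (1 : ℝ)) = 0)
    (hsimple : ((L.map (Complex.ofReal)).charpoly).rootMultiplicity 0 = 1)
    (w : Fin m → ℝ) (hw0 : w ≠ 0) (hwnn : ∀ i, 0 ≤ w i)
    (hwL : Matrix.vecMul w L = 0)
    (K : Matrix (Fin m) (Fin m) ℝ)
    (hKdiag : ∀ i j, i ≠ j → K i j = 0) (hKnn : ∀ i, 0 ≤ K i i)
    (hwK : 0 < Matrix.vecMul w K ⬝ᵥ (fun _ => (1 : ℝ)))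
    (β : ℝ) (hβ : 0 < β)
    (ubar : Fin m → ℝ)
    (hubar : ∀ i, lo i < (ubar i : EReal) ∧ (ubar i : EReal) < hi i) :
    -- (i) ū is the unique minimizer  ↔  (ii) ∃ η̄ ∈ span 𝟙 satisfying the distributed conditions
    (((((∀ i, lo i < (ubar i : EReal) ∧ (ubar i : EReal) < hi i) ∧ ∑ i, ubar i = d) ∧
        (∀ v : Fin m → ℝ,
          ((∀ i, lo i < (v i : EReal) ∧ (v i : EReal) < hi i) ∧ ∑ i, v i = d) →
          ∑ i, J i (ubar i) ≤ ∑ i, J i (v i))) ∧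
      (∀ v : Fin m → ℝ,
        ((((∀ i, lo i < (v i : EReal) ∧ (v i : EReal) < hi i) ∧ ∑ i, v i = d) ∧
          (∀ v' : Fin m → ℝ,
            ((∀ i, lo i < (v' i : EReal) ∧ (v' i : EReal) < hi i) ∧ ∑ i, v' i = d) →
            ∑ i, J i (v i) ≤ ∑ i, J i (v' i)))) → v = ubar)) ↔
      (∃ ηbar : Fin m → ℝ, (∃ c : ℝ, ηbar = fun _ => c) ∧
        (∀ j, 0 = (1 / β) * (K.mulVec (fun _ => (1 : ℝ)) j) * ((∑ i, ubar i) - d)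
            + L.mulVec ηbar j) ∧
        (∀ i, J' i (ubar i) = ηbar i)))
    ∧
    -- Moreover, when (ii) holds the vector η̄ is unique
    (∀ η₁ η₂ : Fin m → ℝ,
      ((∃ c : ℝ, η₁ = fun _ => c) ∧
        (∀ j, 0 = (1 / β) * (K.mulVec (fun _ => (1 : ℝ)) j) * ((∑ i, ubar i) - d)
            + L.mulVec η₁ j) ∧
        (∀ i, J' i (ubar i) = η₁ i)) →
      ((∃ c : ℝ, η₂ = fun _ => c) ∧
        (∀ j, 0 = (1 / β) * (K.mulVec (fun _ => (1 : ℝ)) j) * ((∑ i, ubar i) - d)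
            + L.mulVec η₂ j) ∧
        (∀ i, J' i (ubar i) = η₂ i)) →
      η₁ = η₂) := by
  -- L applied to a constant vector vanishes
  have hLc : ∀ a : ℝ, L.mulVec (fun _ => a) = 0 := by
    intro a
    have h : (fun _ : Fin m => a) = a • (fun _ : Fin m => (1:ℝ)) := by
      funext k; simp
    rw [h, Matrix.mulVec_smul, hL1, smul_zero]
  constructor
  · constructor
    · -- (i) → (ii)
      rintro ⟨⟨⟨_, hsum⟩, hmin⟩, _⟩
      -- gradients are equal at the minimizer
      have hgradeq : ∀ i j : Fin m, J' i (ubar i) = J' j (ubar j) := by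
        intro i j
        by_cases hij : i = j
        · rw [hij]
        · set cc : Fin m → ℝ :=
            fun k => (if k = i then (1:ℝ) else 0) - (if k = j then (1:ℝ) else 0) with hcc
          obtain ⟨εi, hεi, hroomi⟩ := dapi_exists_room (hubar i).1 (hubar i).2
          obtain ⟨εj, hεj, hroomj⟩ := dapi_exists_room (hubar j).1 (hubar j).2
          set ε := min εi εj with hε
          have hεpos : 0 < ε := lt_min hεi hεj
          -- derivative of the perturbed objective
          have hder : HasDerivAt (fun t => ∑ k, J k (ubar k + t * cc k))
              (∑ k, J' k (ubar k) * cc k) 0 := by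
            apply HasDerivAt.fun_sum
            intro k _
            have inner : HasDerivAt (fun t : ℝ => ubar k + t * cc k) (cc k) 0 := by
              simpa using ((hasDerivAt_id (0:ℝ)).mul_const (cc k)).const_add (ubar k)
            have hJk : HasDerivAt (J k) (J' k (ubar k)) ((fun t : ℝ => ubar k + t * cc k) 0) := by
              simpa using hderiv k (ubar k) (hubar k).1 (hubar k).2
            exact (HasDerivAt.comp (0:ℝ) hJk inner)
          -- local minimality
          have hloc : IsLocalMin (fun t => ∑ k, J k (ubar k + t * cc k)) 0 := by
            refine Metric.eventually_nhds_iff.mpr ⟨ε, hεpos, ?_⟩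
            intro t ht
            rw [Real.dist_eq, sub_zero] at ht
            have hti : |t| < εi := lt_of_lt_of_le ht (min_le_left _ _)
            have htj : |t| < εj := lt_of_lt_of_le ht (min_le_right _ _)
            have hfeasv : ∀ k, lo k < ((ubar k + t * cc k : ℝ) : EReal) ∧
                ((ubar k + t * cc k : ℝ) : EReal) < hi k := by
              intro k
              by_cases hki : k = i
              · subst hki
                have : cc k = 1 := by simp [hcc, hij]
                rw [this, mul_one]
                exact hroomi t hti
              · by_cases hkj : k = j
                · subst hkj
                  have : cc k = -1 := by simp [hcc, hki]
                  rw [this]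
                  have := hroomj (-t) (by simpa using htj)
                  simpa [mul_comm] using this
                · have : cc k = 0 := by simp [hcc, hki, hkj]
                  rw [this, mul_zero, add_zero]
                  exact hubar k
            have hsumv : ∑ k, (ubar k + t * cc k) = d := by
              rw [Finset.sum_add_distrib, ← Finset.mul_sum]
              have : ∑ k, cc k = 0 := by
                simp [hcc, Finset.sum_sub_distrib, hij]
              rw [this, mul_zero, add_zero, hsum]
            have := hmin (fun k => ubar k + t * cc k) ⟨hfeasv, hsumv⟩
            simpa using this
          have hzero := hloc.hasDerivAt_eq_zero hder
          have hsum2 : ∑ k, J' k (ubar k) * cc k = J' i (ubar i) - J' j (ubar j) := by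
            simp [hcc, mul_sub, Finset.sum_sub_distrib, mul_ite, mul_one, mul_zero, hij]
          rw [hsum2] at hzero
          linarith
      refine ⟨fun _ => J' ⟨0, hm⟩ (ubar ⟨0, hm⟩), ⟨_, rfl⟩, ?_, fun i => hgradeq i ⟨0, hm⟩⟩
      intro j
      have := congrFun (hLc (J' ⟨0, hm⟩ (ubar ⟨0, hm⟩))) j
      rw [this, hsum]
      simp
    · -- (ii) → (i)
      rintro ⟨ηbar, ⟨a, rfl⟩, heq, hgrad⟩
      -- first: the sum constraint holds
      have hLa := hLc a
      have hj : ∀ j, (1/β) * (K.mulVec (fun _ => (1:ℝ)) j) * ((∑ i, ubar i) - d) = 0 := by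
        intro j
        have h := heq j
        rw [congrFun hLa j] at h
        simpa using h.symm
      have hsum : ∑ i, ubar i = d := by
        by_contra hne
        have hKt : ∀ j, w j * ((1/β) * (K.mulVec (fun _ => (1:ℝ)) j) * ((∑ i, ubar i) - d)) = 0 := by
          intro j; rw [hj j, mul_zero]
        have hsum0 : ∑ j, w j * ((1/β) * (K.mulVec (fun _ => (1:ℝ)) j) * ((∑ i, ubar i) - d)) = 0 :=
          Finset.sum_eq_zero fun j _ => hKt j
        have hre : ∑ j, w j * ((1/β) * (K.mulVec (fun _ => (1:ℝ)) j) * ((∑ i, ubar i) - d))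
            = (1/β) * ((∑ i, ubar i) - d) * (Matrix.vecMul w K ⬝ᵥ (fun _ => (1:ℝ))) := by
          simp only [Matrix.mulVec, Matrix.vecMul, dotProduct, mul_one,
            Finset.mul_sum, Finset.sum_mul]
          rw [Finset.sum_comm]
          apply Finset.sum_congr rfl
          intro j _
          apply Finset.sum_congr rfl
          intro k _
          ring
        rw [hre] at hsum0
        have h1 : (1/β) ≠ 0 := by positivity
        have h2 : (∑ i, ubar i) - d ≠ 0 := sub_ne_zero.mpr hne
        have h3 : (Matrix.vecMul w K ⬝ᵥ (fun _ => (1:ℝ))) ≠ 0 := ne_of_gt hwK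
        exact (mul_ne_zero (mul_ne_zero h1 h2) h3) hsum0
      -- per-coordinate convexity bound
      have key : ∀ (v : Fin m → ℝ),
          (∀ i, lo i < (v i : EReal) ∧ (v i : EReal) < hi i) →
          ∀ i, a * (v i - ubar i) ≤ J i (v i) - J i (ubar i) := by
        intro v hv i
        by_cases hvi : v i = ubar i
        · rw [hvi]; simp
        · have := dapi_strict_grad_ineq (hμ i) (hderiv i) (hconv i)
            (hubar i).1 (hubar i).2 (hv i).1 (hv i).2 (fun h => hvi h.symm)
          rw [hgrad i] at this
          linarith
      have keystrict : ∀ (v : Fin m → ℝ),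
          (∀ i, lo i < (v i : EReal) ∧ (v i : EReal) < hi i) →
          ∀ i, v i ≠ ubar i → a * (v i - ubar i) < J i (v i) - J i (ubar i) := by
        intro v hv i hvi
        have := dapi_strict_grad_ineq (hμ i) (hderiv i) (hconv i)
          (hubar i).1 (hubar i).2 (hv i).1 (hv i).2 (fun h => hvi h.symm)
        rw [hgrad i] at this
        linarith
      have hminim : ∀ v : Fin m → ℝ,
          ((∀ i, lo i < (v i : EReal) ∧ (v i : EReal) < hi i) ∧ ∑ i, v i = d) →
          ∑ i, J i (ubar i) ≤ ∑ i, J i (v i) := by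
        intro v ⟨hvf, hvs⟩
        have h1 : ∑ i, a * (v i - ubar i) ≤ ∑ i, (J i (v i) - J i (ubar i)) :=
          Finset.sum_le_sum fun i _ => key v hvf i
        have h2 : ∑ i, a * (v i - ubar i) = 0 := by
          rw [← Finset.mul_sum, Finset.sum_sub_distrib, hvs, hsum, sub_self, mul_zero]
        rw [Finset.sum_sub_distrib] at h1
        linarith
      refine ⟨⟨⟨hubar, hsum⟩, hminim⟩, ?_⟩
      intro v ⟨⟨hvf, hvs⟩, hvmin⟩
      by_contra hne
      obtain ⟨i0, hi0⟩ := Function.ne_iff.mp hne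
      have h1 : ∑ i, a * (v i - ubar i) < ∑ i, (J i (v i) - J i (ubar i)) := by
        apply Finset.sum_lt_sum (fun i _ => key v hvf i)
        exact ⟨i0, Finset.mem_univ i0, keystrict v hvf i0 hi0⟩
      have h2 : ∑ i, a * (v i - ubar i) = 0 := by
        rw [← Finset.mul_sum, Finset.sum_sub_distrib, hvs, hsum, sub_self, mul_zero]
      rw [Finset.sum_sub_distrib] at h1
      have h3 := hvmin ubar ⟨hubar, hsum⟩
      linarith
  · -- uniqueness of η
    rintro η₁ η₂ ⟨_, _, h1⟩ ⟨_, _, h2⟩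
    funext i
    rw [← h1 i, ← h2 i]
end

section
/- A point ū ∈ ∏_i (u̲_i, ū_i) is a minimizer of the resource allocation problem if and only if Σ_i ū_i = d and there exists λ ∈ ℝ such that J_i'(ū_i) = λ for every i ∈ {1,…,m}. Moreover, such a λ is unique. -/
open Filter

/-- Gradient inequality for a function with monotone derivative on an
order-connected set. -/
lemma grad_ineq_aux (J J' : ℝ → ℝ) (S : Set ℝ) (hS : S.OrdConnected)
    (hd : ∀ x ∈ S, HasDerivAt J (J' x) x)
    (hmono : ∀ x ∈ S, ∀ y ∈ S, x ≤ y → J' x ≤ J' y)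
    (x y : ℝ) (hx : x ∈ S) (hy : y ∈ S) :
    J x + J' x * (y - x) ≤ J y := by
  rcases lt_trichotomy x y with hxy | hxy | hxy
  · have hsub : Set.Icc x y ⊆ S := hS.out hx hy
    have hcont : ContinuousOn J (Set.Icc x y) := fun z hz =>
      ((hd z (hsub hz)).continuousAt).continuousWithinAt
    obtain ⟨c, hc, hcd⟩ := exists_hasDerivAt_eq_slope J J' hxy hcont
      (fun z hz => hd z (hsub (Set.Ioo_subset_Icc_self hz)))
    have hcS : c ∈ S := hsub (Set.Ioo_subset_Icc_self hc)
    have h1 : J' x ≤ J' c := hmono x hx c hcS hc.1.le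
    have h2 : J' c * (y - x) = J y - J x := by
      rw [hcd, div_mul_cancel₀ _ (by linarith : y - x ≠ 0)]
    nlinarith [hc.1, hc.2]
  · simp [hxy]
  · have hsub : Set.Icc y x ⊆ S := hS.out hy hx
    have hcont : ContinuousOn J (Set.Icc y x) := fun z hz =>
      ((hd z (hsub hz)).continuousAt).continuousWithinAt
    obtain ⟨c, hc, hcd⟩ := exists_hasDerivAt_eq_slope J J' hxy hcont
      (fun z hz => hd z (hsub (Set.Ioo_subset_Icc_self hz)))
    have hcS : c ∈ S := hsub (Set.Ioo_subset_Icc_self hc)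
    have h1 : J' c ≤ J' x := hmono c hcS x hx hc.2.le
    have h2 : J' c * (x - y) = J x - J y := by
      rw [hcd, div_mul_cancel₀ _ (by linarith : x - y ≠ 0)]
    nlinarith [hc.1, hc.2]

/-- KKT characterization: `ū` is a minimizer of the resource allocation problem iff it is
feasible and the marginal costs `J_i'(ū_i)` share a common value `λ`; moreover `λ` is unique. -/
theorem dapi_kkt_characterization
    (m : ℕ) (hm : 1 ≤ m)
    (lo hi : Fin m → EReal) (hlohi : ∀ i, lo i < hi i)
    (J J' : Fin m → ℝ → ℝ) (μ : Fin m → ℝ) (hμ : ∀ i, 0 < μ i)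
    (hderiv : ∀ i, ∀ x : ℝ, lo i < (x : EReal) → (x : EReal) < hi i →
      HasDerivAt (J i) (J' i x) x)
    (hJ'cont : ∀ i, ContinuousOn (J' i) {x : ℝ | lo i < (x : EReal) ∧ (x : EReal) < hi i})
    (hconv : ∀ i, ∀ x y : ℝ, lo i < (x : EReal) → (x : EReal) < hi i →
      lo i < (y : EReal) → (y : EReal) < hi i →
      μ i * (x - y) ^ 2 ≤ (J' i x - J' i y) * (x - y))
    (hbarrier_lo : ∀ i, ∀ a : ℝ, lo i = (a : EReal) →
      Tendsto (J i) (nhdsWithin a (Set.Ioi a)) atTop)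
    (hbarrier_hi : ∀ i, ∀ b : ℝ, hi i = (b : EReal) →
      Tendsto (J i) (nhdsWithin b (Set.Iio b)) atTop)
    (d : ℝ)
    (hfeas : ∃ u : Fin m → ℝ,
      (∀ i, lo i < (u i : EReal) ∧ (u i : EReal) < hi i) ∧ ∑ i, u i = d)
    (ubar : Fin m → ℝ)
    (hubar : ∀ i, lo i < (ubar i : EReal) ∧ (ubar i : EReal) < hi i) :
    ((∑ i, ubar i = d ∧
        (∀ v : Fin m → ℝ,
          ((∀ i, lo i < (v i : EReal) ∧ (v i : EReal) < hi i) ∧ ∑ i, v i = d) →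
          ∑ i, J i (ubar i) ≤ ∑ i, J i (v i))) ↔
      (∑ i, ubar i = d ∧ ∃ lam : ℝ, ∀ i, J' i (ubar i) = lam))
    ∧
    (∀ lam₁ lam₂ : ℝ, (∀ i, J' i (ubar i) = lam₁) → (∀ i, J' i (ubar i) = lam₂) →
      lam₁ = lam₂) := by
  set S : Fin m → Set ℝ := fun i => {x : ℝ | lo i < (x : EReal) ∧ (x : EReal) < hi i} with hSdef
  have hSmem : ∀ i x, x ∈ S i ↔ lo i < (x : EReal) ∧ (x : EReal) < hi i := fun i x => Iff.rfl
  have hSord : ∀ i, (S i).OrdConnected := by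
    intro i
    constructor
    intro x hx y hy z hz
    exact ⟨lt_of_lt_of_le hx.1 (EReal.coe_le_coe_iff.2 hz.1),
      lt_of_le_of_lt (EReal.coe_le_coe_iff.2 hz.2) hy.2⟩
  have hSopen : ∀ i, IsOpen (S i) := by
    intro i
    have : S i = (fun x : ℝ => (x : EReal)) ⁻¹' Set.Ioo (lo i) (hi i) := rfl
    rw [this]
    exact isOpen_Ioo.preimage continuous_coe_real_ereal
  have hmono : ∀ i, ∀ x ∈ S i, ∀ y ∈ S i, x ≤ y → J' i x ≤ J' i y := by
    intro i x hx y hy hxy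
    rcases eq_or_lt_of_le hxy with h | h
    · subst h; exact le_rfl
    · have := hconv i y x hy.1 hy.2 hx.1 hx.2
      nlinarith [hμ i, sq_nonneg (y - x), sub_pos.2 h]
  have hgrad : ∀ i, ∀ x ∈ S i, ∀ y ∈ S i, J i x + J' i x * (y - x) ≤ J i y := by
    intro i x hx y hy
    exact grad_ineq_aux (J i) (J' i) (S i) (hSord i)
      (fun z hz => hderiv i z hz.1 hz.2) (hmono i) x y hx hy
  have i0 : Fin m := ⟨0, hm⟩
  -- Key: minimizer ⟹ equal marginals for any two coordinates
  have key : ∀ (hmin : ∀ v : Fin m → ℝ,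
      ((∀ i, lo i < (v i : EReal) ∧ (v i : EReal) < hi i) ∧ ∑ i, v i = d) →
      ∑ i, J i (ubar i) ≤ ∑ i, J i (v i)) (hsum : ∑ i, ubar i = d)
      (i j : Fin m) (hij : i ≠ j), J' i (ubar i) = J' j (ubar j) := by
    intro hmin hsum i j hij
    -- find ε ball
    obtain ⟨ε₁, hε₁, hball₁⟩ := Metric.isOpen_iff.1 (hSopen i) (ubar i) (hubar i)
    obtain ⟨ε₂, hε₂, hball₂⟩ := Metric.isOpen_iff.1 (hSopen j) (ubar j) (hubar j)
    set ε := min ε₁ ε₂ with hεdef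
    have hε : 0 < ε := lt_min hε₁ hε₂
    set φ : ℝ → ℝ := fun t => J i (ubar i + t) + J j (ubar j - t) with hφdef
    have hlocmin : IsLocalMin φ 0 := by
      filter_upwards [Metric.ball_mem_nhds (0 : ℝ) hε] with t ht
      have hti : ubar i + t ∈ S i := by
        apply hball₁
        simp only [Metric.mem_ball, Real.dist_eq] at ht ⊢
        have : |ubar i + t - ubar i| = |t| := by ring_nf
        calc |ubar i + t - ubar i| = |t| := by ring_nf
          _ = |t - 0| := by ring_nf
          _ < ε := ht
          _ ≤ ε₁ := min_le_left _ _
      have htj : ubar j - t ∈ S j := by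
        apply hball₂
        simp only [Metric.mem_ball, Real.dist_eq] at ht ⊢
        calc |ubar j - t - ubar j| = |(-(t - 0))| := by ring_nf
          _ = |t - 0| := abs_neg _
          _ < ε := ht
          _ ≤ ε₂ := min_le_right _ _
      set v : Fin m → ℝ :=
        Function.update (Function.update ubar i (ubar i + t)) j (ubar j - t) with hvdef
      have hvi : v i = ubar i + t := by
        rw [hvdef, Function.update_of_ne hij, Function.update_self]
      have hvj : v j = ubar j - t := by rw [hvdef, Function.update_self]
      have hvk : ∀ k, k ≠ i → k ≠ j → v k = ubar k := by
        intro k hki hkj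
        rw [hvdef, Function.update_of_ne hkj, Function.update_of_ne hki]
      have hvfeas : ∀ k, lo k < (v k : EReal) ∧ (v k : EReal) < hi k := by
        intro k
        rcases eq_or_ne k i with rfl | hki
        · rw [hvi]; exact hti
        rcases eq_or_ne k j with rfl | hkj
        · rw [hvj]; exact htj
        · rw [hvk k hki hkj]; exact hubar k
      have hvsum : ∑ k, v k = d := by
        rw [hvdef, Finset.sum_update_of_mem (Finset.mem_univ j)]
        rw [Finset.sum_update_of_mem (by simp [hij] : i ∈ Finset.univ \ {j})]
        have : (Finset.univ \ {j} : Finset (Fin m)) \ {i}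
            = (Finset.univ.erase j).erase i := by
          ext k; simp [Finset.mem_erase, and_comm]
        rw [this]
        have h1 : ubar i + ∑ x ∈ (Finset.univ.erase j).erase i, ubar x
            = ∑ x ∈ Finset.univ.erase j, ubar x :=
          Finset.add_sum_erase _ ubar (by simp [hij])
        have h2 : ubar j + ∑ x ∈ Finset.univ.erase j, ubar x = ∑ x, ubar x :=
          Finset.add_sum_erase _ ubar (Finset.mem_univ j)
        have := hsum
        linarith
      have := hmin v ⟨hvfeas, hvsum⟩
      -- rewrite sums
      have hgfun : (fun k => J k (v k)) = Function.update
          (Function.update (fun k => J k (ubar k)) i (J i (ubar i + t)))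
          j (J j (ubar j - t)) := by
        funext k
        rcases eq_or_ne k j with rfl | hkj
        · rw [hvj, Function.update_self]
        rcases eq_or_ne k i with rfl | hki
        · rw [hvi, Function.update_of_ne hkj, Function.update_self]
        · rw [hvk k hki hkj, Function.update_of_ne hkj, Function.update_of_ne hki]
      rw [hgfun] at this
      rw [Finset.sum_update_of_mem (Finset.mem_univ j)] at this
      rw [Finset.sum_update_of_mem (by simp [hij] : i ∈ Finset.univ \ {j})] at this
      have hsetU : (Finset.univ \ {j} : Finset (Fin m)) \ {i}
          = (Finset.univ.erase j).erase i := by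
        ext k; simp [Finset.mem_erase, and_comm]
      rw [hsetU] at this
      have h1 : J i (ubar i) + ∑ x ∈ (Finset.univ.erase j).erase i, J x (ubar x)
          = ∑ x ∈ Finset.univ.erase j, J x (ubar x) :=
        Finset.add_sum_erase _ (fun k => J k (ubar k)) (by simp [hij])
      have h2 : J j (ubar j) + ∑ x ∈ Finset.univ.erase j, J x (ubar x)
          = ∑ x, J x (ubar x) :=
        Finset.add_sum_erase _ (fun k => J k (ubar k)) (Finset.mem_univ j)
      show φ 0 ≤ φ t
      simp only [hφdef, add_zero, sub_zero]
      linarith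
    have hd1 : HasDerivAt (fun t : ℝ => J i (ubar i + t)) (J' i (ubar i)) 0 := by
      have inner : HasDerivAt (fun t : ℝ => ubar i + t) 1 0 :=
        (hasDerivAt_id 0).const_add (ubar i)
      have := (hderiv i (ubar i + 0) (by simpa using (hubar i).1)
        (by simpa using (hubar i).2)).comp 0 inner
      simp only [add_zero, mul_one] at this
      exact this
    have hd2 : HasDerivAt (fun t : ℝ => J j (ubar j - t)) (-(J' j (ubar j))) 0 := by
      have inner : HasDerivAt (fun t : ℝ => ubar j - t) (-1) 0 :=
        (hasDerivAt_id 0).const_sub (ubar j)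
      have := (hderiv j (ubar j - 0) (by simpa using (hubar j).1)
        (by simpa using (hubar j).2)).comp 0 inner
      simp only [sub_zero, mul_neg, mul_one] at this
      exact this
    have hφd : HasDerivAt φ (J' i (ubar i) - J' j (ubar j)) 0 := by
      have := hd1.add hd2
      rw [sub_eq_add_neg]
      exact this
    have := hlocmin.hasDerivAt_eq_zero hφd
    linarith
  constructor
  · constructor
    · rintro ⟨hsum, hmin⟩
      refine ⟨hsum, J' i0 (ubar i0), ?_⟩
      intro i
      rcases eq_or_ne i i0 with rfl | hne
      · rfl
      · exact key hmin hsum i i0 hne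
    · rintro ⟨hsum, lam, hlam⟩
      refine ⟨hsum, ?_⟩
      rintro v ⟨hvfeas, hvsum⟩
      have hle : ∀ i : Fin m, J i (ubar i) + lam * (v i - ubar i) ≤ J i (v i) := by
        intro i
        have := hgrad i (ubar i) (hubar i) (v i) (hvfeas i)
        rwa [hlam i] at this
      calc ∑ i, J i (ubar i)
          = ∑ i, (J i (ubar i) + lam * (v i - ubar i)) := by
            rw [Finset.sum_add_distrib, ← Finset.mul_sum, Finset.sum_sub_distrib,
              hsum, hvsum]
            ring
        _ ≤ ∑ i, J i (v i) := Finset.sum_le_sum (fun i _ => hle i)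
  · intro lam₁ lam₂ h₁ h₂
    rw [← h₁ i0, ← h₂ i0]
end

section
/- The resource allocation problem has a unique minimizer: there exists exactly one ū ∈ ∏_i (u̲_i, ū_i) with Σ_i ū_i = d such that Σ_i J_i(ū_i) ≤ Σ_i J_i(u_i) for every u ∈ ∏_i (u̲_i, ū_i) with Σ_i u_i = d. -/
open Filter
open Set

lemma dapi_escape {μ s A B : ℝ} (hμ : 0 < μ) (hA : 0 ≤ A) (hB : 0 ≤ B)
    (hs : 1 + 2 * (A + B + 1) / μ < s) (hq : μ / 2 * s ^ 2 ≤ A * s + B) : False := by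
  obtain ⟨R, hR⟩ : ∃ R : ℝ, R = 1 + 2 * (A + B + 1) / μ := ⟨_, rfl⟩
  have hR1 : 1 ≤ R := by
    have h0 : 0 ≤ 2 * (A + B + 1) / μ := by positivity
    rw [hR]; linarith
  have hsR : R < s := by rw [hR]; exact hs
  have hs0 : 0 < s := by linarith
  have h4 : μ * R = μ + 2 * (A + B + 1) := by rw [hR]; field_simp
  have h3 : 0 < μ * s * (s - R) := mul_pos (mul_pos hμ hs0) (by linarith)
  have h5 : μ * R * s = (μ + 2 * (A + B + 1)) * s := by rw [h4]
  have h6 : 0 ≤ (B + 1) * (s - 1) := mul_nonneg (by linarith) (by linarith)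
  have h7 : 0 ≤ A * (s - 1) := mul_nonneg hA (by linarith)
  have h8 : 0 < μ * s := mul_pos hμ hs0
  nlinarith [h3, h5, h6, h7, h8, hq]


/-- Strong-convexity quadratic lower bound. -/
lemma dapi_quad_bound {S : Set ℝ} (hS : Convex ℝ S) (hSo : IsOpen S)
    {f f' : ℝ → ℝ} {μ : ℝ} (hμ : 0 < μ)
    (hd : ∀ x ∈ S, HasDerivAt f (f' x) x)
    (hc : ∀ x ∈ S, ∀ y ∈ S, μ * (x - y) ^ 2 ≤ (f' x - f' y) * (x - y))
    {x y : ℝ} (hx : x ∈ S) (hy : y ∈ S) :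
    f y + f' y * (x - y) + μ / 2 * (x - y) ^ 2 ≤ f x := by
  set h : ℝ → ℝ := fun z => f z - μ / 2 * z ^ 2 with hh
  have hdh : ∀ z ∈ S, HasDerivAt h (f' z - μ * z) z := by
    intro z hz
    have h1 : HasDerivAt (fun z : ℝ => μ / 2 * z ^ 2) (μ / 2 * (2 * z)) z :=
      (hasDerivAt_pow 2 z).const_mul (μ / 2) |>.congr_deriv (by ring)
    have := (hd z hz).sub h1
    exact this.congr_deriv (by ring)
  have hdiff : DifferentiableOn ℝ h S := fun z hz => ((hdh z hz).differentiableAt).differentiableWithinAt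
  have hcont : ContinuousOn h S := hdiff.continuousOn
  have hmono : MonotoneOn (deriv h) (interior S) := by
    rw [hSo.interior_eq]
    intro a ha b hb hab
    rw [(hdh a ha).deriv, (hdh b hb).deriv]
    rcases eq_or_lt_of_le hab with rfl | hlt
    · exact le_rfl
    · have := hc b hb a ha
      nlinarith [sq_nonneg (b - a), mul_pos hμ (pow_pos (sub_pos.mpr hlt) 2)]
  have hconv : ConvexOn ℝ S h := hmono.convexOn_of_deriv hS hcont (by rwa [hSo.interior_eq])
  have key : h y + (f' y - μ * y) * (x - y) ≤ h x := by
    rcases lt_trichotomy x y with hlt | rfl | hlt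
    · have := hconv.slope_le_of_hasDerivAt hx hy hlt (hdh y hy)
      rw [slope_def_field] at this
      have h2 := (div_le_iff₀ (by linarith : (0:ℝ) < y - x)).mp this
      nlinarith [h2]
    · simp
    · have := hconv.le_slope_of_hasDerivAt hy hx hlt (hdh y hy)
      rw [slope_def_field] at this
      have h2 := (le_div_iff₀ (by linarith : (0:ℝ) < x - y)).mp this
      nlinarith [h2]
  simp only [hh] at key
  nlinarith [key]

lemma dapi_strictConvexOn {S : Set ℝ} (hS : Convex ℝ S) (hSo : IsOpen S)
    {f f' : ℝ → ℝ} {μ : ℝ} (hμ : 0 < μ)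
    (hd : ∀ x ∈ S, HasDerivAt f (f' x) x)
    (hc : ∀ x ∈ S, ∀ y ∈ S, μ * (x - y) ^ 2 ≤ (f' x - f' y) * (x - y)) :
    StrictConvexOn ℝ S f := by
  have hcont : ContinuousOn f S := fun z hz => ((hd z hz).differentiableAt).continuousAt.continuousWithinAt
  refine StrictMonoOn.strictConvexOn_of_deriv hS hcont ?_
  rw [hSo.interior_eq]
  intro a ha b hb hab
  rw [(hd a ha).deriv, (hd b hb).deriv]
  have := hc b hb a ha
  nlinarith [mul_pos hμ (pow_pos (sub_pos.mpr hab) 2)]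

lemma dapi_confine (lo hi : EReal) (hlohi : lo < hi)
    {f f' : ℝ → ℝ} {μ : ℝ} (hμ : 0 < μ)
    (hd : ∀ x ∈ {x : ℝ | lo < (x : EReal) ∧ (x : EReal) < hi}, HasDerivAt f (f' x) x)
    (hc : ∀ x ∈ {x : ℝ | lo < (x : EReal) ∧ (x : EReal) < hi},
      ∀ y ∈ {x : ℝ | lo < (x : EReal) ∧ (x : EReal) < hi},
      μ * (x - y) ^ 2 ≤ (f' x - f' y) * (x - y))
    (hblo : ∀ a : ℝ, lo = (a : EReal) → Tendsto f (nhdsWithin a (Set.Ioi a)) atTop)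
    (hbhi : ∀ b : ℝ, hi = (b : EReal) → Tendsto f (nhdsWithin b (Set.Iio b)) atTop)
    {y : ℝ} (hy : lo < (y : EReal) ∧ (y : EReal) < hi) (t : ℝ) :
    ∃ α β : ℝ, (lo < (α : EReal) ∧ (α : EReal) < hi) ∧ (lo < (β : EReal) ∧ (β : EReal) < hi) ∧
      α ≤ y ∧ y ≤ β ∧
      ∀ x : ℝ, lo < (x : EReal) ∧ (x : EReal) < hi → f x ≤ t → x ∈ Icc α β := by
  have hSc : Convex ℝ {x : ℝ | lo < (x : EReal) ∧ (x : EReal) < hi} := by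
    rw [convex_iff_ordConnected]
    constructor
    intro a ha b hb z hz
    exact ⟨lt_of_lt_of_le ha.1 (EReal.coe_le_coe_iff.mpr hz.1),
      lt_of_le_of_lt (EReal.coe_le_coe_iff.mpr hz.2) hb.2⟩
  have hSo : IsOpen {x : ℝ | lo < (x : EReal) ∧ (x : EReal) < hi} :=
    isOpen_Ioo.preimage continuous_coe_real_ereal
  have quad : ∀ x : ℝ, (lo < (x : EReal) ∧ (x : EReal) < hi) → ∀ z : ℝ, (lo < (z : EReal) ∧ (z : EReal) < hi) →
      f z + f' z * (x - z) + μ / 2 * (x - z) ^ 2 ≤ f x :=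
    fun x hx z hz => dapi_quad_bound hSc hSo hμ hd hc hx hz
  clear hd hc hSc hSo
  -- lower side
  have hlow : ∃ α : ℝ, (lo < (α : EReal) ∧ (α : EReal) < hi) ∧ α ≤ y ∧
      ∀ x : ℝ, lo < (x : EReal) ∧ (x : EReal) < hi → f x ≤ t → α ≤ x := by
    induction lo with
    | bot =>
      obtain ⟨R, hR⟩ : ∃ R : ℝ, R = 1 + 2 * (|f' y| + |f y - t| + 1) / μ := ⟨_, rfl⟩
      have hR0 : 0 < R := by
        have h0 : 0 ≤ 2 * (|f' y| + |f y - t| + 1) / μ := by positivity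
        rw [hR]; linarith
      refine ⟨y - R, ⟨EReal.bot_lt_coe _, ?_⟩, by linarith, ?_⟩
      · exact lt_of_le_of_lt (EReal.coe_le_coe_iff.mpr (by linarith)) hy.2
      · intro x hx hfx
        by_contra hcon
        push_neg at hcon
        have hq := quad x hx y hy
        have hs : R < y - x := by linarith
        have hs0 : 0 < y - x := by linarith
        refine dapi_escape (s := y - x) (A := |f' y|) (B := |f y - t|) hμ (abs_nonneg _) (abs_nonneg _) (by rw [← hR]; exact hs) ?_
        have e1 : f' y * (y - x) ≤ |f' y| * (y - x) :=
          mul_le_mul_of_nonneg_right (le_abs_self _) hs0.le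
        have e2 : t - f y ≤ |f y - t| := by
          have := neg_le_abs (f y - t); linarith
        nlinarith [hq, e1, e2, hfx]
    | coe a =>
      have ha_lt : a < y := EReal.coe_lt_coe_iff.mp hy.1
      have hev : ∀ᶠ x in nhdsWithin a (Set.Ioi a), t < f x :=
        (hblo a rfl).eventually (eventually_gt_atTop t)
      rw [eventually_nhdsWithin_iff] at hev
      rw [Metric.eventually_nhds_iff] at hev
      obtain ⟨ε, hε, hball⟩ := hev
      refine ⟨min y (a + ε / 2), ⟨?_, ?_⟩, min_le_left _ _, ?_⟩
      · exact EReal.coe_lt_coe_iff.mpr (lt_min ha_lt (by linarith))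
      · exact lt_of_le_of_lt (EReal.coe_le_coe_iff.mpr (min_le_left _ _)) hy.2
      · intro x hx hfx
        by_contra hcon
        push_neg at hcon
        have hax : a < x := EReal.coe_lt_coe_iff.mp hx.1
        have hxe : x < a + ε / 2 := lt_of_lt_of_le hcon (min_le_right _ _)
        have : t < f x := by
          refine hball ?_ hax
          rw [Real.dist_eq, abs_of_pos (by linarith : (0:ℝ) < x - a)]
          linarith
        linarith
    | top => exact absurd hlohi (by simp)
  -- upper side
  have hhigh : ∃ β : ℝ, (lo < (β : EReal) ∧ (β : EReal) < hi) ∧ y ≤ β ∧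
      ∀ x : ℝ, lo < (x : EReal) ∧ (x : EReal) < hi → f x ≤ t → x ≤ β := by
    induction hi with
    | top =>
      obtain ⟨R, hR⟩ : ∃ R : ℝ, R = 1 + 2 * (|f' y| + |f y - t| + 1) / μ := ⟨_, rfl⟩
      have hR0 : 0 < R := by
        have h0 : 0 ≤ 2 * (|f' y| + |f y - t| + 1) / μ := by positivity
        rw [hR]; linarith
      refine ⟨y + R, ⟨?_, EReal.coe_lt_top _⟩, by linarith, ?_⟩
      · exact lt_of_lt_of_le hy.1 (EReal.coe_le_coe_iff.mpr (by linarith))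
      · intro x hx hfx
        by_contra hcon
        push_neg at hcon
        have hq := quad x hx y hy
        have hs : R < x - y := by linarith
        have hs0 : 0 < x - y := by linarith
        refine dapi_escape (s := x - y) (A := |f' y|) (B := |f y - t|) hμ (abs_nonneg _) (abs_nonneg _) (by rw [← hR]; exact hs) ?_
        have e1 : -(f' y) * (x - y) ≤ |f' y| * (x - y) :=
          mul_le_mul_of_nonneg_right (neg_le_abs _) hs0.le
        have e2 : t - f y ≤ |f y - t| := by
          have := neg_le_abs (f y - t); linarith
        nlinarith [hq, e1, e2, hfx]
    | coe b =>
      have hb_lt : y < b := EReal.coe_lt_coe_iff.mp hy.2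
      have hev : ∀ᶠ x in nhdsWithin b (Set.Iio b), t < f x :=
        (hbhi b rfl).eventually (eventually_gt_atTop t)
      rw [eventually_nhdsWithin_iff] at hev
      rw [Metric.eventually_nhds_iff] at hev
      obtain ⟨ε, hε, hball⟩ := hev
      refine ⟨max y (b - ε / 2), ⟨?_, ?_⟩, le_max_left _ _, ?_⟩
      · exact lt_of_lt_of_le hy.1 (EReal.coe_le_coe_iff.mpr (le_max_left _ _))
      · exact EReal.coe_lt_coe_iff.mpr (max_lt hb_lt (by linarith))
      · intro x hx hfx
        by_contra hcon
        push_neg at hcon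
        have hbx : x < b := EReal.coe_lt_coe_iff.mp hx.2
        have hxe : b - ε / 2 < x := lt_of_le_of_lt (le_max_right _ _) hcon
        have : t < f x := by
          refine hball ?_ hbx
          rw [Real.dist_eq, abs_of_neg (by linarith : x - b < 0)]
          linarith
        linarith
    | bot => exact absurd hlohi (by simp)
  obtain ⟨α, hα, hαy, hαbd⟩ := hlow
  obtain ⟨β, hβ, hyβ, hβbd⟩ := hhigh
  exact ⟨α, β, hα, hβ, hαy, hyβ, fun x hx hfx => ⟨hαbd x hx hfx, hβbd x hx hfx⟩⟩


/-- The resource allocation problem has a unique minimizer. -/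
theorem dapi_unique_minimizer
    (m : ℕ) (hm : 1 ≤ m)
    (lo hi : Fin m → EReal) (hlohi : ∀ i, lo i < hi i)
    (J J' : Fin m → ℝ → ℝ) (μ : Fin m → ℝ) (hμ : ∀ i, 0 < μ i)
    (hderiv : ∀ i, ∀ x : ℝ, lo i < (x : EReal) → (x : EReal) < hi i →
      HasDerivAt (J i) (J' i x) x)
    (hJ'cont : ∀ i, ContinuousOn (J' i) {x : ℝ | lo i < (x : EReal) ∧ (x : EReal) < hi i})
    (hconv : ∀ i, ∀ x y : ℝ, lo i < (x : EReal) → (x : EReal) < hi i →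
      lo i < (y : EReal) → (y : EReal) < hi i →
      μ i * (x - y) ^ 2 ≤ (J' i x - J' i y) * (x - y))
    (hbarrier_lo : ∀ i, ∀ a : ℝ, lo i = (a : EReal) →
      Tendsto (J i) (nhdsWithin a (Set.Ioi a)) atTop)
    (hbarrier_hi : ∀ i, ∀ b : ℝ, hi i = (b : EReal) →
      Tendsto (J i) (nhdsWithin b (Set.Iio b)) atTop)
    (d : ℝ)
    (hfeas : ∃ u : Fin m → ℝ,
      (∀ i, lo i < (u i : EReal) ∧ (u i : EReal) < hi i) ∧ ∑ i, u i = d) :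
    ∃! ubar : Fin m → ℝ,
      ((∀ i, lo i < (ubar i : EReal) ∧ (ubar i : EReal) < hi i) ∧ ∑ i, ubar i = d) ∧
      (∀ v : Fin m → ℝ,
        ((∀ i, lo i < (v i : EReal) ∧ (v i : EReal) < hi i) ∧ ∑ i, v i = d) →
        ∑ i, J i (ubar i) ≤ ∑ i, J i (v i)) := by
  -- the open interval sets
  have hSc : ∀ i, Convex ℝ {x : ℝ | lo i < (x : EReal) ∧ (x : EReal) < hi i} := by
    intro i
    rw [convex_iff_ordConnected]
    constructor
    intro a ha b hb z hz
    exact ⟨lt_of_lt_of_le ha.1 (EReal.coe_le_coe_iff.mpr hz.1),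
      lt_of_le_of_lt (EReal.coe_le_coe_iff.mpr hz.2) hb.2⟩
  have hSo : ∀ i, IsOpen {x : ℝ | lo i < (x : EReal) ∧ (x : EReal) < hi i} :=
    fun i => isOpen_Ioo.preimage continuous_coe_real_ereal
  have hd' : ∀ i, ∀ x ∈ {x : ℝ | lo i < (x : EReal) ∧ (x : EReal) < hi i},
      HasDerivAt (J i) (J' i x) x := fun i x hx => hderiv i x hx.1 hx.2
  have hc' : ∀ i, ∀ x ∈ {x : ℝ | lo i < (x : EReal) ∧ (x : EReal) < hi i},
      ∀ y ∈ {x : ℝ | lo i < (x : EReal) ∧ (x : EReal) < hi i},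
      μ i * (x - y) ^ 2 ≤ (J' i x - J' i y) * (x - y) :=
    fun i x hx y hy => hconv i x y hx.1 hx.2 hy.1 hy.2
  obtain ⟨u0, hu0S, hu0sum⟩ := hfeas
  set F : (Fin m → ℝ) → ℝ := fun u => ∑ i, J i (u i) with hF
  set c : ℝ := ∑ i, J i (u0 i) with hc
  set b : Fin m → ℝ := fun i => J i (u0 i) - (J' i (u0 i)) ^ 2 / (2 * μ i) with hbdef
  -- lower bound on each J i
  have hb : ∀ i, ∀ x : ℝ, (lo i < (x : EReal) ∧ (x : EReal) < hi i) → b i ≤ J i x := by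
    intro i x hx
    have hq := dapi_quad_bound (hSc i) (hSo i) (hμ i) (hd' i) (hc' i) hx (hu0S i)
    have hμi := hμ i
    have hD : (J' i (u0 i)) ^ 2 / (2 * μ i) * (2 * μ i) = (J' i (u0 i)) ^ 2 := by
      field_simp
    have hsq : 0 ≤ (J' i (u0 i) + μ i * (x - u0 i)) ^ 2 := sq_nonneg _
    simp only [hbdef]
    nlinarith [hq, hsq, hμi, hD]
  -- confinement
  have hconf : ∀ i, ∃ α β : ℝ,
      ((lo i) < (α : EReal) ∧ (α : EReal) < hi i) ∧ ((lo i) < (β : EReal) ∧ (β : EReal) < hi i) ∧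
      α ≤ u0 i ∧ u0 i ≤ β ∧
      ∀ x : ℝ, lo i < (x : EReal) ∧ (x : EReal) < hi i → J i x ≤ c - ∑ j, b j + b i →
        x ∈ Icc α β :=
    fun i => dapi_confine (lo i) (hi i) (hlohi i) (hμ i) (hd' i) (hc' i)
      (hbarrier_lo i) (hbarrier_hi i) (hu0S i) _
  choose α β hα hβ hαu0 hu0β hbd using hconf
  have hIccS : ∀ i, Icc (α i) (β i) ⊆ {x : ℝ | lo i < (x : EReal) ∧ (x : EReal) < hi i} :=
    fun i => (hSc i).ordConnected.out (hα i) (hβ i)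
  set K0 : Set (Fin m → ℝ) :=
    (Set.univ.pi fun i => Icc (α i) (β i)) ∩ {u | ∑ i, u i = d} with hK0
  have hK0cpt : IsCompact K0 :=
    (isCompact_univ_pi fun i => isCompact_Icc).inter_right
      (isClosed_eq (continuous_finset_sum _ fun i _ => continuous_apply i) continuous_const)
  have hFcont : ContinuousOn F K0 := by
    apply continuousOn_finset_sum
    intro i _
    intro u hu
    have hui : u i ∈ {x : ℝ | lo i < (x : EReal) ∧ (x : EReal) < hi i} :=
      hIccS i (hu.1 i (mem_univ i))
    exact (ContinuousAt.comp (f := fun p : Fin m → ℝ => p i) (x := u)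
      ((hderiv i (u i) hui.1 hui.2).differentiableAt.continuousAt)
      (continuous_apply i).continuousAt).continuousWithinAt
  have hu0K0 : u0 ∈ K0 := ⟨fun i _ => ⟨hαu0 i, hu0β i⟩, hu0sum⟩
  obtain ⟨ubar, hubarK0, hubarmin⟩ := hK0cpt.exists_isMinOn ⟨u0, hu0K0⟩ hFcont
  have hubarS : ∀ i, lo i < (ubar i : EReal) ∧ (ubar i : EReal) < hi i :=
    fun i => hIccS i (hubarK0.1 i (mem_univ i))
  -- global minimality
  have hglobal : ∀ v : Fin m → ℝ,
      ((∀ i, lo i < (v i : EReal) ∧ (v i : EReal) < hi i) ∧ ∑ i, v i = d) →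
      F ubar ≤ F v := by
    intro v hv
    by_cases hvc : F v ≤ c
    · have hvK0 : v ∈ K0 := by
        refine ⟨fun i _ => ?_, hv.2⟩
        refine hbd i (v i) (hv.1 i) ?_
        have h1 : ∑ j ∈ Finset.univ.erase i, b j ≤ ∑ j ∈ Finset.univ.erase i, J j (v j) :=
          Finset.sum_le_sum fun j _ => hb j (v j) (hv.1 j)
        have h2 : J i (v i) + ∑ j ∈ Finset.univ.erase i, J j (v j) = ∑ j, J j (v j) :=
          Finset.add_sum_erase Finset.univ (fun j => J j (v j)) (Finset.mem_univ i)
        have h3 : b i + ∑ j ∈ Finset.univ.erase i, b j = ∑ j, b j :=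
          Finset.add_sum_erase Finset.univ b (Finset.mem_univ i)
        have hvc' : ∑ j, J j (v j) ≤ c := hvc
        linarith
      exact isMinOn_iff.mp hubarmin v hvK0
    · push_neg at hvc
      have : F ubar ≤ F u0 := isMinOn_iff.mp hubarmin u0 hu0K0
      have hcc : F u0 = c := rfl
      linarith
  -- strict convexity of F on the feasible set
  set A : Set (Fin m → ℝ) :=
    {u | (∀ i, lo i < (u i : EReal) ∧ (u i : EReal) < hi i) ∧ ∑ i, u i = d} with hA
  have hAconv : Convex ℝ A := by
    intro u hu v hv a e ha he hae
    constructor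
    · intro i
      have := hSc i (hu.1 i) (hv.1 i) ha he hae
      simpa using this
    · have : ∑ i, (a * u i + e * v i) = a * ∑ i, u i + e * ∑ i, v i := by
        rw [Finset.sum_add_distrib, ← Finset.mul_sum, ← Finset.mul_sum]
      simp only [Pi.add_apply, Pi.smul_apply, smul_eq_mul]
      rw [this, hu.2, hv.2]
      linear_combination d * hae
  have hstrict : ∀ i, StrictConvexOn ℝ {x : ℝ | lo i < (x : EReal) ∧ (x : EReal) < hi i} (J i) :=
    fun i => dapi_strictConvexOn (hSc i) (hSo i) (hμ i) (hd' i) (hc' i)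
  have hFstrict : StrictConvexOn ℝ A F := by
    refine ⟨hAconv, ?_⟩
    intro u hu v hv huv a e ha he hae
    obtain ⟨i0, hi0⟩ : ∃ i0, u i0 ≠ v i0 := by
      by_contra hcon
      push_neg at hcon
      exact huv (funext hcon)
    have hFval : F (a • u + e • v) = ∑ i, J i (a * u i + e * v i) := by
      simp [hF, Pi.add_apply, Pi.smul_apply, smul_eq_mul]
    rw [hFval]
    have hlt : ∑ i, J i (a * u i + e * v i) < ∑ i, (a * J i (u i) + e * J i (v i)) := by
      refine Finset.sum_lt_sum (fun i _ => ?_) ⟨i0, Finset.mem_univ i0, ?_⟩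
      · have := (hstrict i).convexOn.2 (hu.1 i) (hv.1 i) ha.le he.le hae
        simpa [smul_eq_mul] using this
      · have := (hstrict i0).2 (hu.1 i0) (hv.1 i0) hi0 ha he hae
        simpa [smul_eq_mul] using this
    calc ∑ i, J i (a * u i + e * v i) < ∑ i, (a * J i (u i) + e * J i (v i)) := hlt
      _ = a * ∑ i, J i (u i) + e * ∑ i, J i (v i) := by
          rw [Finset.sum_add_distrib, ← Finset.mul_sum, ← Finset.mul_sum]
      _ = a • F u + e • F v := by simp [hF, smul_eq_mul]
  -- conclusion
  refine ⟨ubar, ⟨⟨hubarS, hubarK0.2⟩, hglobal⟩, ?_⟩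
  rintro w ⟨hwfeas, hwmin⟩
  have hwA : w ∈ A := hwfeas
  have hubarA : ubar ∈ A := ⟨hubarS, hubarK0.2⟩
  have hwMin : IsMinOn F A w := isMinOn_iff.mpr fun v hv => hwmin v hv
  have hubarMin : IsMinOn F A ubar := isMinOn_iff.mpr fun v hv => hglobal v hv
  exact hFstrict.eq_of_isMinOn hwMin hubarMin hwA hubarA
end

section
/- Let L ∈ ℝ^{m×m} satisfy L𝟙 = 0, suppose 0 is a simple eigenvalue of L (a root of multiplicity one of its characteristic polynomial over ℂ) and every nonzero complex eigenvalue of L has positive real part, and let V⊥ ∈ ℝ^{m×(m−1)} have orthonormal columns spanning {x ∈ ℝ^m : 𝟙ᵀx = 0}. Then every complex eigenvalue of V⊥ᵀ L V⊥ has positive real part; in particular V⊥ᵀ L V⊥ is invertible and −V⊥ᵀ L V⊥ is a Hurwitz matrix. -/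
open Matrix Polynomial

private lemma my_charpoly_conj {n : Type*} [Fintype n] [DecidableEq n] {R : Type*} [CommRing R]
    (Q M : Matrix n n R) (h1 : Qᵀ * Q = 1) :
    (Qᵀ * M * Q).charpoly = M.charpoly := by
  have hmapC : ∀ (A B : Matrix n n R), (A * B).map (C : R → R[X]) = A.map C * B.map C := by
    intro A B
    exact Matrix.map_mul
  have hch : charmatrix (Qᵀ * M * Q) = Qᵀ.map C * charmatrix M * Q.map C := by
    have hcomm : Qᵀ.map (C : R → R[X]) * Matrix.scalar n (X : R[X])
        = Matrix.scalar n (X : R[X]) * Qᵀ.map C :=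
      ((scalar_commute (X : R[X]) (fun r' => Commute.all X r') (Qᵀ.map C))).symm
    calc charmatrix (Qᵀ * M * Q)
        = Matrix.scalar n (X : R[X]) - (Qᵀ * M * Q).map C := rfl
      _ = Qᵀ.map C * charmatrix M * Q.map C := by
          rw [charmatrix]
          rw [mul_sub, sub_mul]
          congr 1
          · rw [hcomm, mul_assoc, ← hmapC, h1]
            have : (1 : Matrix n n R).map (C : R → R[X]) = 1 := by
              ext i j
              by_cases h : i = j <;> simp [Matrix.one_apply, h]
            rw [this, mul_one]
          · show (Qᵀ * M * Q).map (C : R → R[X]) = _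
            rw [hmapC, hmapC]
            rfl
  rw [Matrix.charpoly, Matrix.charpoly, hch, det_mul, det_mul]
  have hmap_det : ∀ A : Matrix n n R, (A.map (C : R → R[X])).det = C A.det := by
    intro A
    rw [← RingHom.mapMatrix_apply (C : R →+* R[X]), ← RingHom.map_det]
  have hdet : (Qᵀ.map (C : R → R[X])).det * (Q.map C).det = 1 := by
    rw [hmap_det, hmap_det, ← _root_.map_mul, ← det_mul, h1, det_one, _root_.map_one]
  rw [mul_comm (Qᵀ.map C).det (charmatrix M).det, mul_assoc, hdet, mul_one]

private lemma my_eval_charpoly {n : Type*} [Fintype n] [DecidableEq n] {R : Type*} [CommRing R]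
    (M : Matrix n n R) (z : R) :
    M.charpoly.eval z = (z • (1 : Matrix n n R) - M).det := by
  rw [Matrix.charpoly, ← Polynomial.coe_evalRingHom, RingHom.map_det]
  congr 1
  ext i j
  by_cases h : i = j <;>
    simp [charmatrix_apply, Matrix.one_apply, Matrix.diagonal_apply, h]

private lemma my_charpoly_neg_root {n : Type*} [Fintype n] [DecidableEq n]
    (M : Matrix n n ℂ) (z : ℂ) (h : (-M).charpoly.IsRoot z) : M.charpoly.IsRoot (-z) := by
  rw [IsRoot, my_eval_charpoly] at h ⊢
  have he : (-z) • (1 : Matrix n n ℂ) - M = -(z • (1 : Matrix n n ℂ) - -M) := by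
    rw [neg_smul]
    abel
  rw [he, det_neg, h, mul_zero]

/-- If `L𝟙 = 0`, `0` is a simple eigenvalue of `L`, and every nonzero complex eigenvalue of
`L` has positive real part, then every complex eigenvalue of `V⊥ᵀ L V⊥` has positive real
part; in particular `V⊥ᵀ L V⊥` is invertible and `−V⊥ᵀ L V⊥` is Hurwitz. -/
theorem projected_laplacian_hurwitz
    (m : ℕ) (hm : 2 ≤ m)
    (L : Matrix (Fin m) (Fin m) ℝ)
    (hL1 : L.mulVec (fun _ => (1 : ℝ)) = 0)
    (hsimple : ((L.map (Complex.ofReal)).charpoly).rootMultiplicity 0 = 1)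
    (hspec : ∀ z : ℂ, ((L.map (Complex.ofReal)).charpoly).IsRoot z → z ≠ 0 → 0 < z.re)
    (V : Matrix (Fin m) (Fin (m - 1)) ℝ)
    (hVtV : Vᵀ * V = 1)
    (hV1 : Vᵀ.mulVec (fun _ => (1 : ℝ)) = 0)
    (hVVt : V * Vᵀ = 1 - (m : ℝ)⁻¹ • Matrix.of (fun _ _ => (1 : ℝ))) :
    (∀ z : ℂ, (((Vᵀ * L * V).map (Complex.ofReal)).charpoly).IsRoot z → 0 < z.re) ∧
    IsUnit (Vᵀ * L * V) ∧
    (∀ z : ℂ, (((-(Vᵀ * L * V)).map (Complex.ofReal)).charpoly).IsRoot z → z.re < 0) := by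
  classical
  have hmR : (0 : ℝ) < (m : ℝ) := by
    have : 0 < m := by omega
    exact_mod_cast this
  have hsm : Real.sqrt m ≠ 0 := by positivity
  set c : ℝ := (Real.sqrt m)⁻¹ with hc
  have hcc : c * c = (m : ℝ)⁻¹ := by
    rw [hc, ← mul_inv, Real.mul_self_sqrt (le_of_lt hmR)]
  set u : Matrix (Fin m) Unit ℝ := Matrix.of (fun _ _ => c) with hu
  -- row sums of L vanish
  have hLsum : ∀ i, ∑ j, L i j = 0 := by
    intro i
    have := congrFun hL1 i
    simpa [Matrix.mulVec, dotProduct] using this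
  have hVsum : ∀ j, ∑ k, V k j = 0 := by
    intro j
    have := congrFun hV1 j
    simpa [Matrix.mulVec, dotProduct] using this
  have hLu : L * u = 0 := by
    ext i j
    simp only [hu, Matrix.mul_apply, Matrix.of_apply, Matrix.zero_apply]
    rw [← Finset.sum_mul, hLsum i, zero_mul]
  have hVtu : Vᵀ * u = 0 := by
    ext i j
    simp only [hu, Matrix.mul_apply, Matrix.of_apply, Matrix.zero_apply, transpose_apply]
    rw [← Finset.sum_mul, hVsum i, zero_mul]
  have hutV : uᵀ * V = 0 := by
    ext i j
    simp only [hu, Matrix.mul_apply, Matrix.of_apply, Matrix.zero_apply, transpose_apply]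
    rw [← Finset.mul_sum, hVsum j, mul_zero]
  have hutu : uᵀ * u = 1 := by
    ext i j
    simp only [hu, Matrix.mul_apply, Matrix.of_apply, transpose_apply]
    rw [Finset.sum_const, Finset.card_univ, Fintype.card_fin, hcc, nsmul_eq_mul]
    rw [mul_inv_cancel₀ (ne_of_gt hmR)]
    have : i = j := Subsingleton.elim i j
    simp [this, Matrix.one_apply]
  have huut : u * uᵀ = (m : ℝ)⁻¹ • Matrix.of (fun _ _ => (1 : ℝ)) := by
    ext i j
    simp only [hu, Matrix.mul_apply, Matrix.of_apply, transpose_apply, Matrix.smul_apply,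
      smul_eq_mul, mul_one]
    rw [Finset.sum_const, Finset.card_univ]
    simp [hcc]
  set Q : Matrix (Fin m) (Fin (m - 1) ⊕ Unit) ℝ := fromCols V u with hQ
  have hQtQ : Qᵀ * Q = 1 := by
    rw [hQ, transpose_fromCols, fromRows_mul_fromCols, hVtV, hVtu, hutV, hutu,
      fromBlocks_one]
  have hQLQ : Qᵀ * L * Q = fromBlocks (Vᵀ * L * V) 0 (uᵀ * L * V) 0 := by
    rw [hQ, transpose_fromCols, Matrix.mul_assoc, mul_fromCols, hLu,
      fromRows_mul_fromCols, Matrix.mul_zero, Matrix.mul_zero,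
      ← Matrix.mul_assoc, ← Matrix.mul_assoc]
  -- the equivalence of index types
  have hcard : Fintype.card (Fin (m - 1) ⊕ Unit) = Fintype.card (Fin m) := by
    simp
    omega
  set e : (Fin (m - 1) ⊕ Unit) ≃ Fin m := Fintype.equivOfCardEq hcard with he
  set Q' : Matrix (Fin m) (Fin m) ℝ := Q.submatrix id e.symm with hQ'
  have happ : ∀ i j, ∑ k, Q k i * Q k j = (1 : Matrix (Fin (m-1) ⊕ Unit) _ ℝ) i j := by
    intro i j
    have := congrFun (congrFun hQtQ i) j
    simpa [Matrix.mul_apply, transpose_apply] using this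
  have hQ'tQ' : Q'ᵀ * Q' = 1 := by
    ext i j
    simp only [Matrix.mul_apply, transpose_apply, hQ', submatrix_apply, id]
    rw [happ (e.symm i) (e.symm j)]
    by_cases h : i = j
    · simp [h, Matrix.one_apply]
    · have : e.symm i ≠ e.symm j := fun hh => h (e.symm.injective hh)
      simp [Matrix.one_apply, h, this]
  have hconj : Q'ᵀ * L * Q' = (Qᵀ * L * Q).submatrix e.symm e.symm := by
    ext i j
    simp only [Matrix.mul_apply, transpose_apply, hQ', submatrix_apply, id,
      Finset.sum_mul]
  have hccharzero : (0 : Matrix Unit Unit ℝ).charpoly = X := by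
    rw [Matrix.charpoly, det_unique]
    simp [charmatrix_apply]
  have hchar : L.charpoly = (Vᵀ * L * V).charpoly * X := by
    have h1 : (Q'ᵀ * L * Q').charpoly = L.charpoly := my_charpoly_conj Q' L hQ'tQ'
    rw [← h1, hconj]
    have h2 : (Qᵀ * L * Q).submatrix ⇑e.symm ⇑e.symm = reindex e e (Qᵀ * L * Q) := rfl
    rw [h2, charpoly_reindex, hQLQ, charpoly_fromBlocks_zero₁₂, hccharzero]
  have hofReal : (Complex.ofReal : ℝ → ℂ) = ⇑(Complex.ofRealHom) := rfl
  have hC : (L.map Complex.ofReal).charpoly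
      = ((Vᵀ * L * V).map Complex.ofReal).charpoly * X := by
    rw [hofReal, charpoly_map, charpoly_map, hchar, Polynomial.map_mul, Polynomial.map_X]
  set q : ℂ[X] := ((Vᵀ * L * V).map Complex.ofReal).charpoly with hq
  have hqne : q ≠ 0 := (charpoly_monic _).ne_zero
  have hqX : q * X ≠ 0 := mul_ne_zero hqne X_ne_zero
  have hmult : rootMultiplicity 0 q + rootMultiplicity 0 (X : ℂ[X]) = 1 := by
    rw [← rootMultiplicity_mul hqX, ← hC]
    exact hsimple
  have hmX : rootMultiplicity 0 (X : ℂ[X]) = 1 := by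
    have := rootMultiplicity_X_sub_C (R := ℂ) (x := 0) (y := 0)
    simpa using this
  have hm0 : rootMultiplicity 0 q = 0 := by omega
  have hq0 : ¬ q.IsRoot 0 := by
    intro h
    exact hqne (rootMultiplicity_eq_zero_iff.mp hm0 h)
  have part1 : ∀ z : ℂ, q.IsRoot z → 0 < z.re := by
    intro z hz
    have hzne : z ≠ 0 := by
      intro h
      exact hq0 (h ▸ hz)
    apply hspec z _ hzne
    rw [IsRoot, hC, eval_mul, eval_X]
    rw [IsRoot] at hz
    rw [hq] at hz
    rw [hz, zero_mul]
  refine ⟨part1, ?_, ?_⟩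
  · rw [Matrix.isUnit_iff_isUnit_det, isUnit_iff_ne_zero]
    intro hdet
    apply hq0
    have hev : (Vᵀ * L * V).charpoly.eval 0 = 0 := by
      have h := Matrix.det_eq_sign_charpoly_coeff (Vᵀ * L * V)
      rw [hdet, coeff_zero_eq_eval_zero] at h
      have hne : ((-1 : ℝ)) ^ Fintype.card (Fin (m - 1)) ≠ 0 := by
        simp
      field_simp at h
      exact (mul_eq_zero.mp h.symm).resolve_left hne
    rw [IsRoot, hq, hofReal, charpoly_map, Polynomial.eval_map]
    have h0 : (Complex.ofRealHom : ℝ →+* ℂ) 0 = 0 := map_zero _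
    rw [← h0, Polynomial.eval₂_at_apply, hev, map_zero]
  · intro z hz
    have hneg : (-(Vᵀ * L * V)).map Complex.ofReal = -((Vᵀ * L * V).map Complex.ofReal) := by
      ext i j
      simp
    rw [hneg] at hz
    have h := my_charpoly_neg_root _ z hz
    have := part1 (-z) h
    simp only [Complex.neg_re] at this
    linarith
end

section
/- Let β, κ, ρ > 0 and let α > βκ²/(4ρ). Suppose V : ℝ → ℝ and W : ℝ^k → ℝ are differentiable, and φ : ℝ → ℝ, ψ : ℝ × ℝ^k → ℝ, f₂ : ℝ^k → ℝ^k satisfy, for all z ∈ ℝ and δ ∈ ℝ^k: V'(z)·φ(z) = −(1/β)·(V'(z))², |ψ(z, δ)| ≤ κ‖δ‖₂, and ∇W(δ)ᵀ f₂(δ) ≤ −ρ‖δ‖₂². Then there exists c > 0 such that for all z ∈ ℝ and δ ∈ ℝ^k, V'(z)·(φ(z) + ψ(z, δ)) + α·∇W(δ)ᵀ f₂(δ) ≤ −c·((V'(z))² + ‖δ‖₂²). (Composite Lyapunov function construction for the nonlinear cascade in the proof of the main theorem.) -/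
open Filter

/-- Composite Lyapunov construction for the nonlinear cascade: if
`V'(z)φ(z) = −(1/β)V'(z)²`, `|ψ(z,δ)| ≤ κ‖δ‖₂` and `∇W(δ)ᵀf₂(δ) ≤ −ρ‖δ‖₂²`, then for any
`α > βκ²/(4ρ)` the composite derivative is negative definite in `(V'(z), ‖δ‖₂)`. -/
theorem composite_lyapunov_inequality
    (k : ℕ) (hk : 1 ≤ k)
    (β κ ρ α : ℝ) (hβ : 0 < β) (hκ : 0 < κ) (hρ : 0 < ρ)
    (hα : β * κ ^ 2 / (4 * ρ) < α)
    (V V' : ℝ → ℝ)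
    (hV : ∀ z : ℝ, HasDerivAt V (V' z) z)
    (W : EuclideanSpace ℝ (Fin k) → ℝ)
    (gradW : EuclideanSpace ℝ (Fin k) → EuclideanSpace ℝ (Fin k))
    (hW : ∀ δ, HasGradientAt W (gradW δ) δ)
    (φ : ℝ → ℝ) (ψ : ℝ → EuclideanSpace ℝ (Fin k) → ℝ)
    (f₂ : EuclideanSpace ℝ (Fin k) → EuclideanSpace ℝ (Fin k))
    (hφ : ∀ z : ℝ, V' z * φ z = -(1 / β) * (V' z) ^ 2)
    (hψ : ∀ (z : ℝ) (δ : EuclideanSpace ℝ (Fin k)), |ψ z δ| ≤ κ * ‖δ‖)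
    (hf₂ : ∀ δ : EuclideanSpace ℝ (Fin k), (inner ℝ (gradW δ) (f₂ δ) : ℝ) ≤ -ρ * ‖δ‖ ^ 2) :
    ∃ c : ℝ, 0 < c ∧
      ∀ (z : ℝ) (δ : EuclideanSpace ℝ (Fin k)),
        V' z * (φ z + ψ z δ) + α * (inner ℝ (gradW δ) (f₂ δ) : ℝ)
          ≤ -c * ((V' z) ^ 2 + ‖δ‖ ^ 2) := by

  have hα0 : 0 < α := lt_trans (by positivity) hα
  set A : ℝ := 1 / β with hA
  set B : ℝ := α * ρ with hB
  have hA0 : 0 < A := by positivity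
  have hB0 : 0 < B := by positivity
  have hAB : κ ^ 2 / 4 < A * B := by
    rw [hA, hB, show (1/β)*(α*ρ) = (α*ρ)/β by ring,
      div_lt_div_iff₀ (by norm_num) hβ]
    rw [div_lt_iff₀ (by positivity)] at hα
    nlinarith
  refine ⟨(A * B - κ ^ 2 / 4) / (A + B), div_pos (by linarith) (by positivity), ?_⟩
  set c : ℝ := (A * B - κ ^ 2 / 4) / (A + B) with hc
  have hcA : c < A := by
    rw [hc, div_lt_iff₀ (by positivity)]
    nlinarith
  have hcB : c < B := by
    rw [hc, div_lt_iff₀ (by positivity)]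
    nlinarith
  have hkey : 4 * (A - c) * (B - c) ≥ κ ^ 2 := by
    have : c * (A + B) = A * B - κ ^ 2 / 4 := by
      rw [hc, div_mul_cancel₀]; positivity
    nlinarith [sq_nonneg c]
  intro z δ
  have hv : V' z * ψ z δ ≤ |V' z| * (κ * ‖δ‖) := by
    calc V' z * ψ z δ ≤ |V' z * ψ z δ| := le_abs_self _
      _ = |V' z| * |ψ z δ| := abs_mul _ _
      _ ≤ |V' z| * (κ * ‖δ‖) := by
          exact mul_le_mul_of_nonneg_left (hψ z δ) (abs_nonneg _)
  have hW' : α * (inner ℝ (gradW δ) (f₂ δ) : ℝ) ≤ -B * ‖δ‖ ^ 2 := by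
    have := hf₂ δ
    rw [hB]; nlinarith
  have hquad : (A - c) * |V' z| ^ 2 - κ * |V' z| * ‖δ‖ + (B - c) * ‖δ‖ ^ 2 ≥ 0 := by
    nlinarith [sq_nonneg (2 * (A - c) * |V' z| - κ * ‖δ‖), abs_nonneg (V' z),
      norm_nonneg δ, sq_nonneg (‖δ‖), mul_nonneg (abs_nonneg (V' z)) (norm_nonneg δ)]
  have habs : |V' z| ^ 2 = (V' z) ^ 2 := sq_abs _
  have h1 : V' z * φ z = -A * (V' z) ^ 2 := by rw [hφ z, hA]
  nlinarith [hquad, habs, hv, hW', h1]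
end

section
/- Let ū ∈ ∏_i (u̲_i, ū_i) be the unique minimizer of the resource allocation problem and let λ ∈ ℝ be the common value J_i'(ū_i) = λ, and set η̄ = λ𝟙. Suppose η : [0,∞) → ℝ^m is continuously differentiable and u : [0,∞) → ∏_i (u̲_i, ū_i) satisfies, for all t ≥ 0 and all i, J_i'(u_i(t)) = η_i(t) and η'(t) = −(1/β) 𝟙 (Σ_{i=1}^m u_i(t) − d) − L η(t). Then η(t) → η̄ and u(t) → ū as t → +∞. (Global attractivity of the optimal point for the reduced DAPI dynamics; the main convergence content of the paper's Theorem 1 after the time-scale separation.) -/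
open Filter Matrix Polynomial

lemma antitoneOn_Icc_of_hasDerivAt {f g : ℝ → ℝ} {a b : ℝ}
    (hf : ∀ t ∈ Set.Icc a b, HasDerivAt f (g t) t)
    (hg : ∀ t ∈ Set.Icc a b, g t ≤ 0) : AntitoneOn f (Set.Icc a b) := by
  apply antitoneOn_of_deriv_nonpos (convex_Icc a b)
  · exact fun t ht => (hf t ht).continuousAt.continuousWithinAt
  · intro t ht
    rw [interior_Icc] at ht
    exact (hf t (Set.mem_Icc_of_Ioo ht)).differentiableAt.differentiableWithinAt
  · intro t ht
    rw [interior_Icc] at ht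
    rw [(hf t (Set.mem_Icc_of_Ioo ht)).deriv]
    exact hg t (Set.mem_Icc_of_Ioo ht)

lemma le_of_hasDerivAt_nonpos {f g : ℝ → ℝ} {a b : ℝ} (hab : a ≤ b)
    (hf : ∀ t ∈ Set.Icc a b, HasDerivAt f (g t) t)
    (hg : ∀ t ∈ Set.Icc a b, g t ≤ 0) : f b ≤ f a :=
  antitoneOn_Icc_of_hasDerivAt hf hg (Set.left_mem_Icc.2 hab) (Set.right_mem_Icc.2 hab) hab

lemma forced_decay_scalar (r : ℂ) (hr : 0 < r.re) (u g : ℝ → ℂ)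
    (hu : ∀ t : ℝ, 0 ≤ t → HasDerivAt u (-(r * u t) - g t) t)
    (hg : Tendsto g atTop (nhds 0)) : Tendsto u atTop (nhds 0) := by
  set p := r.re with hp
  set D := fun t => Complex.normSq (u t) with hD
  have hDnn : ∀ t, 0 ≤ D t := fun t => Complex.normSq_nonneg _
  -- derivative of D
  have hDd : ∀ t : ℝ, 0 ≤ t → HasDerivAt D
      (2 * ((u t).re * (-(r * u t) - g t).re + (u t).im * (-(r * u t) - g t).im)) t := by
    intro t ht
    have h1 : HasDerivAt (fun s => (u s).re) ((-(r * u t) - g t).re) t :=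
      (Complex.reCLM.hasFDerivAt.comp_hasDerivAt t (hu t ht))
    have h2 : HasDerivAt (fun s => (u s).im) ((-(r * u t) - g t).im) t :=
      (Complex.imCLM.hasFDerivAt.comp_hasDerivAt t (hu t ht))
    have h3 : HasDerivAt (fun s => (u s).re * (u s).re + (u s).im * (u s).im)
        ((-(r * u t) - g t).re * (u t).re + (u t).re * (-(r * u t) - g t).re +
         ((-(r * u t) - g t).im * (u t).im + (u t).im * (-(r * u t) - g t).im)) t :=
      (h1.mul h1).add (h2.mul h2)
    have hEq : D = fun s => (u s).re * (u s).re + (u s).im * (u s).im := by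
      funext s; simp [hD, Complex.normSq_apply]
    rw [hEq]
    convert h3 using 1
    ring
  -- the key differential inequality
  have hDineq : ∀ t : ℝ,
      2 * ((u t).re * (-(r * u t) - g t).re + (u t).im * (-(r * u t) - g t).im)
        ≤ -p * D t + Complex.normSq (g t) / p := by
    intro t
    have hx : (-(r * u t) - g t).re = -(r.re * (u t).re - r.im * (u t).im) - (g t).re := by
      simp [Complex.sub_re, Complex.neg_re, Complex.mul_re]
    have hy : (-(r * u t) - g t).im = -(r.re * (u t).im + r.im * (u t).re) - (g t).im := by
      simp [Complex.sub_im, Complex.neg_im, Complex.mul_im]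
    rw [hx, hy]
    have hDval : D t = (u t).re * (u t).re + (u t).im * (u t).im := by
      simp [hD, Complex.normSq_apply]
    have hgval : Complex.normSq (g t) = (g t).re * (g t).re + (g t).im * (g t).im := by
      simp [Complex.normSq_apply]
    rw [hDval, hgval]
    set x := (u t).re; set y := (u t).im; set gx := (g t).re; set gy := (g t).im
    have hBp : gx * gx + gy * gy = p * ((gx * gx + gy * gy) / p) :=
      (mul_div_cancel₀ _ (ne_of_gt hr)).symm
    nlinarith [sq_nonneg (p * x + gx), sq_nonneg (p * y + gy), hr, sq_nonneg x, sq_nonneg y]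
  -- D is eventually small
  have hevent : ∀ ε > (0:ℝ), ∀ᶠ t in atTop, D t ≤ ε := by
    intro ε hε
    set c := ε / 2 with hc
    have hc0 : 0 < c := by positivity
    -- choose T with |g|² ≤ p² c beyond T
    have hgsq : Tendsto (fun t => Complex.normSq (g t)) atTop (nhds 0) := by
      have := (Complex.continuous_normSq.tendsto 0).comp hg
      simpa [Function.comp_def] using this
    have hev : ∀ᶠ t in atTop, Complex.normSq (g t) ≤ p * p * c := by
      have hppc : 0 < p * p * c := by positivity
      filter_upwards [hgsq.eventually_le_const hppc] with t ht using ht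
    rw [eventually_atTop] at hev
    obtain ⟨T₀, hT₀⟩ := hev
    set T := max T₀ 0 with hT
    have hTnn : (0:ℝ) ≤ T := le_max_right _ _
    have hgT : ∀ t ≥ T, Complex.normSq (g t) ≤ p * p * c :=
      fun t ht => hT₀ t (le_trans (le_max_left _ _) ht)
    -- E is antitone on [T, t]
    have hEle : ∀ t ≥ T, Real.exp (p * t) * (D t - c) ≤ Real.exp (p * T) * (D T - c) := by
      intro t ht
      have := le_of_hasDerivAt_nonpos (f := fun s => Real.exp (p * s) * (D s - c))
        (g := fun s => p * Real.exp (p * s) * (D s - c) + Real.exp (p * s) *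
          (2 * ((u s).re * (-(r * u s) - g s).re + (u s).im * (-(r * u s) - g s).im))) ht
        (fun s hs => by
          have hs0 : (0:ℝ) ≤ s := le_trans hTnn hs.1
          have he : HasDerivAt (fun s' => Real.exp (p * s')) (Real.exp (p * s) * p) s :=
            by simpa using ((hasDerivAt_id s).const_mul p).exp
          have hprod := he.mul ((hDd s hs0).sub_const c)
          exact hprod.congr_deriv (by ring))
        (fun s hs => by
          have hs0 : (0:ℝ) ≤ s := le_trans hTnn hs.1
          have h1 := hDineq s
          have hgs : Complex.normSq (g s) / p ≤ p * c := by
            rw [div_le_iff₀ hr]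
            calc Complex.normSq (g s) ≤ p * p * c := hgT s hs.1
            _ = p * c * p := by ring
          have hexp : (0:ℝ) < Real.exp (p * s) := Real.exp_pos _
          have hX : 2 * ((u s).re * (-(r * u s) - g s).re + (u s).im * (-(r * u s) - g s).im)
              ≤ -p * D s + p * c := by linarith
          have h2 := mul_le_mul_of_nonneg_left hX hexp.le
          beta_reduce
          nlinarith [h2])
      exact this
    -- conclude
    have hbd : ∀ t ≥ T, D t ≤ c + Real.exp (p * T) * D T * Real.exp (-(p * t)) := by
      intro t ht
      have h1 := hEle t ht
      have h2 : Real.exp (p * T) * (D T - c) ≤ Real.exp (p * T) * D T := by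
        have := hDnn T
        nlinarith [Real.exp_pos (p * T), hc0]
      have hexp : (0:ℝ) < Real.exp (p * t) := Real.exp_pos _
      have h3 : Real.exp (p * t) * (D t - c) ≤ Real.exp (p * T) * D T := le_trans h1 h2
      have h4 : D t - c ≤ Real.exp (p * T) * D T * Real.exp (-(p * t)) := by
        rw [Real.exp_neg]
        rw [mul_comm (Real.exp (p*t)) (D t - c)] at h3
        calc D t - c = (D t - c) * Real.exp (p * t) * (Real.exp (p * t))⁻¹ := by
              field_simp
        _ ≤ Real.exp (p * T) * D T * (Real.exp (p * t))⁻¹ := by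
              apply mul_le_mul_of_nonneg_right h3 (by positivity)
      linarith
    have hdecay : Tendsto (fun t => c + Real.exp (p * T) * D T * Real.exp (-(p * t))) atTop
        (nhds (c + Real.exp (p * T) * D T * 0)) := by
      apply tendsto_const_nhds.add
      apply Tendsto.const_mul
      have : Tendsto (fun t : ℝ => -(p * t)) atTop atBot := by
        apply tendsto_neg_atBot_iff.2
        exact Tendsto.const_mul_atTop hr tendsto_id
      exact Real.tendsto_exp_atBot.comp this
    rw [mul_zero, add_zero] at hdecay
    have : ∀ᶠ t in atTop, c + Real.exp (p * T) * D T * Real.exp (-(p * t)) ≤ ε := by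
      have : ∀ᶠ t in atTop, c + Real.exp (p * T) * D T * Real.exp (-(p * t)) < c + c := by
        apply hdecay.eventually_lt_const
        linarith
      filter_upwards [this] with t ht
      calc c + Real.exp (p * T) * D T * Real.exp (-(p * t)) ≤ c + c := ht.le
      _ = ε := by rw [hc]; ring
    filter_upwards [this, eventually_ge_atTop T] with t h1 h2
    exact le_trans (hbd t h2) h1
  -- hence D → 0
  have hD0 : Tendsto D atTop (nhds 0) := by
    rw [tendsto_order]
    constructor
    · intro x hx
      filter_upwards with t
      exact lt_of_lt_of_le hx (hDnn t)
    · intro x hx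
      filter_upwards [hevent (x/2) (by linarith)] with t ht
      linarith
  -- hence u → 0
  have habs : Tendsto (fun t => ‖u t‖) atTop (nhds 0) := by
    have h := (Real.continuous_sqrt.tendsto 0).comp hD0
    rw [Real.sqrt_zero] at h
    have heq : (fun t => ‖u t‖) = Real.sqrt ∘ D := by
      funext t; exact Complex.norm_def _
    rw [heq]; exact h
  rw [tendsto_zero_iff_norm_tendsto_zero]
  simpa using habs

lemma matrix_decay {m : ℕ} (M : Matrix (Fin m) (Fin m) ℂ) :
    ∀ (rs : List ℂ), (∀ r ∈ rs, 0 < r.re) →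
    ∀ (v : ℝ → Fin m → ℂ),
    (∀ t : ℝ, 0 ≤ t → HasDerivAt v (-(M.mulVec (v t))) t) →
    Tendsto (fun t => ((rs.map (fun r => M - r • 1)).prod).mulVec (v t)) atTop (nhds 0) →
    Tendsto v atTop (nhds 0) := by
  intro rs
  induction rs with
  | nil =>
    intro _ v _ h0
    simpa [Matrix.one_mulVec] using h0
  | cons r rs ih =>
    intro hre v hv h0
    have hrre : 0 < r.re := hre r List.mem_cons_self
    have hre' : ∀ r' ∈ rs, 0 < r'.re := fun r' h => hre r' (List.mem_cons_of_mem r h)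
    set P := ((rs.map (fun r' => M - r' • 1)).prod) with hP
    have hcomm : M * P = P * M := by
      have hc : Commute M P := by
        apply Commute.list_prod_right
        intro y hy
        obtain ⟨r', _, rfl⟩ := List.mem_map.1 hy
        exact (Commute.refl M).sub_right ((Commute.one_right M).smul_right r')
      exact hc
    set A := ((Matrix.mulVecLin P).toContinuousLinearMap).restrictScalars ℝ with hA
    have hAapp : ∀ x, A x = P.mulVec x := fun x => rfl
    set w := fun t => P.mulVec (v t) with hwdef
    have hwd : ∀ t : ℝ, 0 ≤ t → HasDerivAt w (-(M.mulVec (w t))) t := by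
      intro t ht
      have h1 := (A.hasFDerivAt (x := v t)).comp_hasDerivAt t (hv t ht)
      have h2 : A (-(M.mulVec (v t))) = -(M.mulVec (w t)) := by
        rw [hAapp, Matrix.mulVec_neg, Matrix.mulVec_mulVec, ← hcomm, ← Matrix.mulVec_mulVec]
      rw [h2] at h1
      exact h1
    have h0' : Tendsto (fun t => (M - r • 1).mulVec (w t)) atTop (nhds 0) := by
      have heq : (fun t => ((((r :: rs).map (fun r' => M - r' • 1)).prod)).mulVec (v t))
          = fun t => (M - r • 1).mulVec (w t) := by
        funext t
        rw [List.map_cons, List.prod_cons, ← Matrix.mulVec_mulVec]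
      rw [heq] at h0
      exact h0
    have hw0 : Tendsto w atTop (nhds 0) := by
      rw [tendsto_pi_nhds]
      intro i
      have hgi : Tendsto (fun t => ((M - r • 1).mulVec (w t)) i) atTop (nhds 0) := by
        have h3 := tendsto_pi_nhds.1 h0' i
        simpa using h3
      have hui : ∀ t : ℝ, 0 ≤ t → HasDerivAt (fun s => w s i)
          (-(r * w t i) - ((M - r • 1).mulVec (w t)) i) t := by
        intro t ht
        have h4 := hasDerivAt_pi.1 (hwd t ht) i
        refine h4.congr_deriv ?_
        have h5 : (M.mulVec (w t)) i = ((M - r • 1).mulVec (w t)) i + r * w t i := by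
          rw [Matrix.sub_mulVec]
          have h6 : ((r • (1 : Matrix (Fin m) (Fin m) ℂ)).mulVec (w t)) = r • (w t) := by
            rw [Matrix.smul_mulVec, Matrix.one_mulVec]
          rw [h6]
          simp
        simp [h5]
        ring
      have h7 := forced_decay_scalar r hrre (fun t => w t i) _ hui hgi
      simpa using h7
    exact ih hre' v hv (by simpa [← hwdef] using hw0)

lemma mulVec_map_ofReal {m : ℕ} (L : Matrix (Fin m) (Fin m) ℝ) (v : Fin m → ℝ) :
    (L.map (Complex.ofReal)).mulVec (fun i => (v i : ℂ)) = fun i => ((L.mulVec v i : ℝ) : ℂ) := by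
  funext i
  simp [Matrix.mulVec, dotProduct, Matrix.map_apply]

lemma charpoly_coeff_facts {m : ℕ} (L : Matrix (Fin m) (Fin m) ℝ)
    (hsimple : ((L.map (Complex.ofReal)).charpoly).rootMultiplicity 0 = 1) :
    L.charpoly.coeff 0 = 0 ∧ (L.charpoly.divX).coeff 0 ≠ 0 := by
  have hmap : (L.map (Complex.ofReal)).charpoly = L.charpoly.map (algebraMap ℝ ℂ) := by
    have := Matrix.charpoly_map L (algebraMap ℝ ℂ)
    simpa using this
  have hpcne : (L.map (Complex.ofReal)).charpoly ≠ 0 := (Matrix.charpoly_monic _).ne_zero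
  constructor
  · -- X ∣ charpoly over ℂ
    have h1 : (X - C (0:ℂ)) ^ 1 ∣ (L.map (Complex.ofReal)).charpoly := by
      rw [← hsimple]
      exact Polynomial.pow_rootMultiplicity_dvd _ 0
    rw [map_zero, sub_zero, pow_one, Polynomial.X_dvd_iff] at h1
    rw [hmap, Polynomial.coeff_map] at h1
    exact (map_eq_zero_iff _ (algebraMap ℝ ℂ).injective).1 h1
  · intro hq0
    have hx : X ∣ L.charpoly.divX := Polynomial.X_dvd_iff.2 hq0
    have hp0 : L.charpoly.coeff 0 = 0 := by
      have h1 : (X - C (0:ℂ)) ^ 1 ∣ (L.map (Complex.ofReal)).charpoly := by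
        rw [← hsimple]
        exact Polynomial.pow_rootMultiplicity_dvd _ 0
      rw [map_zero, sub_zero, pow_one, Polynomial.X_dvd_iff] at h1
      rw [hmap, Polynomial.coeff_map] at h1
      exact (map_eq_zero_iff _ (algebraMap ℝ ℂ).injective).1 h1
    have hpeq : L.charpoly.divX * X = L.charpoly := by
      have := Polynomial.divX_mul_X_add L.charpoly
      rw [hp0, map_zero, add_zero] at this
      exact this
    have hx2 : X ^ 2 ∣ L.charpoly := by
      obtain ⟨c, hc⟩ := hx
      exact ⟨c, by rw [← hpeq, hc]; ring⟩
    have hx2c : (X - C (0:ℂ)) ^ 2 ∣ (L.map (Complex.ofReal)).charpoly := by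
      rw [map_zero, sub_zero, hmap]
      obtain ⟨c, hc⟩ := hx2
      exact ⟨c.map (algebraMap ℝ ℂ), by
        rw [hc, Polynomial.map_mul, Polynomial.map_pow, Polynomial.map_X]⟩
    have h2 : 2 ≤ ((L.map (Complex.ofReal)).charpoly).rootMultiplicity 0 :=
      (Polynomial.le_rootMultiplicity_iff hpcne).2 hx2c
    rw [hsimple] at h2
    omega

lemma Lη_tendsto_zero {m : ℕ} (L : Matrix (Fin m) (Fin m) ℝ)
    (hL1 : L.mulVec (fun _ => (1 : ℝ)) = 0)
    (hsimple : ((L.map (Complex.ofReal)).charpoly).rootMultiplicity 0 = 1)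
    (hspec : ∀ z : ℂ, ((L.map (Complex.ofReal)).charpoly).IsRoot z → z ≠ 0 → 0 < z.re)
    (c : ℝ → ℝ) (η : ℝ → Fin m → ℝ)
    (hη : ∀ t : ℝ, 0 ≤ t →
      HasDerivAt η (fun j => c t - L.mulVec (η t) j) t) :
    Tendsto (fun t => L.mulVec (η t)) atTop (nhds 0) := by
  obtain ⟨hp0, hq0⟩ := charpoly_coeff_facts L hsimple
  set p := L.charpoly with hp
  set q := L.charpoly.divX with hq
  have hpeq : q * X = p := by
    have := Polynomial.divX_mul_X_add L.charpoly
    rw [hp0, map_zero, add_zero] at this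
    exact this
  have hmap : (L.map (Complex.ofReal)).charpoly = p.map (algebraMap ℝ ℂ) := by
    have := Matrix.charpoly_map L (algebraMap ℝ ℂ)
    simpa using this
  set Mc := L.map (Complex.ofReal) with hMc
  set Q := q.map (algebraMap ℝ ℂ) with hQ
  have hQmonic : Q.Monic := by
    have hpm : p.Monic := Matrix.charpoly_monic L
    have hqm : q.Monic := by
      have hxm : (X : ℝ[X]).Monic := Polynomial.monic_X
      have : (X * q).Monic := by rwa [mul_comm, hpeq]
      exact hxm.of_mul_monic_left this
    exact hqm.map _
  have hQne : Q ≠ 0 := hQmonic.ne_zero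
  -- roots of Q have positive real part
  set l := Q.roots.toList with hl
  have hroots : ∀ r ∈ l, 0 < r.re := by
    intro r hr
    rw [hl, Multiset.mem_toList] at hr
    have hisroot : Q.IsRoot r := (Polynomial.mem_roots hQne).1 hr
    have hrne : r ≠ 0 := by
      intro h0
      apply hq0
      have : Q.coeff 0 = 0 := by
        rw [Polynomial.coeff_zero_eq_eval_zero]
        rw [h0] at hisroot
        exact hisroot
      rw [hQ, Polynomial.coeff_map] at this
      exact (map_eq_zero_iff _ (algebraMap ℝ ℂ).injective).1 this
    apply hspec r _ hrne
    rw [hmap, ← hpeq]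
    have : (Q * X).IsRoot r := by
      simp [Polynomial.IsRoot, hisroot.eq_zero]
    simpa [Polynomial.map_mul, hQ] using this
  -- Q factors as product of roots
  have hQprod : Q = (l.map (fun a => X - C a)).prod := by
    have hsplit := (IsAlgClosed.splits Q).eq_prod_roots_of_monic hQmonic
    rw [hsplit]
    rw [hl]
    rw [← Multiset.prod_coe (l.map (fun a => X - C a))]
    congr 1
    rw [hl, ← Multiset.map_coe, Multiset.coe_toList]
  -- aeval of Q on Mc as a list product
  have haevalQ : (Polynomial.aeval Mc) Q = ((l.map (fun r => Mc - r • 1)).prod) := by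
    rw [hQprod, map_list_prod]
    rw [List.map_map]
    have hfe : (⇑(Polynomial.aeval Mc) ∘ fun a => X - C a) =
        (fun r : ℂ => Mc - r • (1 : Matrix (Fin m) (Fin m) ℂ)) := by
      funext r
      simp [Algebra.algebraMap_eq_smul_one]
    rw [hfe]
  -- the vector z and its complexification Z
  set z := fun t => L.mulVec (η t) with hz
  set Z := fun t => fun i => ((z t i : ℝ) : ℂ) with hZ'
  -- derivative of z
  have hzd : ∀ t : ℝ, 0 ≤ t → HasDerivAt z (-(L.mulVec (z t))) t := by
    intro t ht
    set B := ((Matrix.mulVecLin L).toContinuousLinearMap) with hB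
    have h1 := (B.hasFDerivAt (x := η t)).comp_hasDerivAt t (hη t ht)
    have h2 : B (fun j => c t - L.mulVec (η t) j) = -(L.mulVec (z t)) := by
      show L.mulVec (fun j => c t - L.mulVec (η t) j) = -(L.mulVec (z t))
      have hfun : (fun j => c t - L.mulVec (η t) j) = (c t • (fun _ => (1:ℝ)) - L.mulVec (η t)) := by
        funext j; simp
      rw [hfun, Matrix.mulVec_sub, Matrix.mulVec_smul, hL1]
      simp [hz]
    rw [h2] at h1
    exact h1
  -- derivative of Z
  have hZd : ∀ t : ℝ, 0 ≤ t → HasDerivAt Z (-(Mc.mulVec (Z t))) t := by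
    intro t ht
    rw [hasDerivAt_pi]
    intro i
    have h1 := hasDerivAt_pi.1 (hzd t ht) i
    have h2 := h1.ofReal_comp
    refine h2.congr_deriv ?_
    have h3 : Mc.mulVec (Z t) = fun i => ((L.mulVec (z t) i : ℝ) : ℂ) := by
      rw [hMc]
      exact mulVec_map_ofReal L (z t)
    rw [h3]
    simp
  -- the forcing term vanishes identically by Cayley–Hamilton
  have hforce : ∀ t : ℝ, ((l.map (fun r => Mc - r • 1)).prod).mulVec (Z t) = 0 := by
    intro t
    rw [← haevalQ]
    have haev : (Polynomial.aeval Mc) Q = ((Polynomial.aeval L) q).map (Complex.ofReal) := by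
      rw [hQ]
      have h5 : (Polynomial.aeval Mc) (q.map (algebraMap ℝ ℂ)) = (Polynomial.aeval Mc) q :=
        Polynomial.aeval_map_algebraMap ℂ Mc q
      have h6 : Mc = Complex.ofRealAm.mapMatrix (m := Fin m) L := by
        rw [hMc]; rfl
      have h7 : (Polynomial.aeval Mc) q = ((Polynomial.aeval L) q).map (Complex.ofReal) := by
        rw [h6]
        rw [Polynomial.aeval_algHom_apply Complex.ofRealAm.mapMatrix L q]
        rfl
      rw [← h7]
      simpa using h5
    rw [haev]
    have h8 : ((((Polynomial.aeval L) q).map (Complex.ofReal)).mulVec (Z t)) =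
        fun i => ((((Polynomial.aeval L) q).mulVec (z t) i : ℝ) : ℂ) :=
      mulVec_map_ofReal _ _
    rw [h8]
    have h9 : ((Polynomial.aeval L) q).mulVec (z t) = 0 := by
      rw [hz]
      rw [Matrix.mulVec_mulVec]
      have h10 : (Polynomial.aeval L) q * L = (Polynomial.aeval L) p := by
        rw [← hpeq]
        simp [_root_.map_mul]
      rw [h10, Matrix.aeval_self_charpoly]
      simp
    rw [h9]
    funext i
    simp
  -- apply the decay lemma
  have hZ0 : Tendsto Z atTop (nhds 0) := by
    apply matrix_decay Mc l hroots Z hZd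
    have : (fun t => ((l.map (fun r => Mc - r • 1)).prod).mulVec (Z t)) = fun _ => 0 := by
      funext t; exact hforce t
    rw [this]
    exact tendsto_const_nhds
  -- real part
  rw [tendsto_pi_nhds]
  intro i
  have h11 := tendsto_pi_nhds.1 hZ0 i
  have h12 := (Complex.continuous_re.tendsto 0).comp h11
  simpa [Function.comp_def, hZ'] using h12

lemma ker_L_one {m : ℕ} (hm : 0 < m) (L : Matrix (Fin m) (Fin m) ℝ)
    (hL1 : L.mulVec (fun _ => (1 : ℝ)) = 0)
    (hp0 : L.charpoly.coeff 0 = 0)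
    (hq0 : (L.charpoly.divX).coeff 0 ≠ 0)
    (v : Fin m → ℝ) (hv : L.mulVec v = 0) : ∃ c : ℝ, v = fun _ => c := by
  by_contra hind
  push_neg at hind
  set one : Fin m → ℝ := fun _ => 1 with hone
  have hone0 : one ≠ 0 := by
    intro h
    have h2 := congrFun h ⟨0, hm⟩
    simp [hone] at h2
  have hli2 : LinearIndependent ℝ ![v, one] := by
    rw [linearIndependent_fin2]
    simp only [Matrix.cons_val_one, Matrix.head_cons, Matrix.cons_val_zero]
    refine ⟨hone0, fun a ha => ?_⟩
    apply hind a
    rw [← ha]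
    funext i
    simp [hone]
  have hli : LinearIndepOn ℝ id (Set.range ![v, one]) :=
    hli2.linearIndepOn_id
  set B := Module.Basis.extend hli with hB
  haveI : Fintype ↥(hli.extend (Set.subset_univ (Set.range ![v, one]))) :=
    FiniteDimensional.fintypeBasisIndex B
  haveI : DecidableEq ↥(hli.extend (Set.subset_univ (Set.range ![v, one]))) :=
    Classical.decEq _
  set f := Matrix.toLin' L with hf
  set A := LinearMap.toMatrix B B f with hA
  have hApoly : A.charpoly = L.charpoly := by
    rw [hA, LinearMap.charpoly_toMatrix]
    have h1 : L.charpoly = (LinearMap.toMatrix' f).charpoly := by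
      rw [hf, LinearMap.toMatrix'_toLin']
    rw [h1, ← LinearMap.toMatrix_eq_toMatrix']
    rw [LinearMap.charpoly_toMatrix]
  -- indices for v and one
  have hsub : Set.range ![v, one] ⊆ hli.extend (Set.subset_univ _) := hli.subset_extend _
  have hvmem : v ∈ Set.range ![v, one] := ⟨0, rfl⟩
  have honemem : one ∈ Set.range ![v, one] := ⟨1, rfl⟩
  set j₀ : ↥(hli.extend (Set.subset_univ (Set.range ![v, one]))) := ⟨v, hsub hvmem⟩ with hj₀
  set j₁ : ↥(hli.extend (Set.subset_univ (Set.range ![v, one]))) := ⟨one, hsub honemem⟩ with hj₁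
  have hBj₀ : B j₀ = v := Module.Basis.extend_apply_self hli j₀
  have hBj₁ : B j₁ = one := Module.Basis.extend_apply_self hli j₁
  have hj01 : j₀ ≠ j₁ := by
    intro h
    have h3 := congrArg B h
    rw [hBj₀, hBj₁] at h3
    exact hind 1 (by rw [h3, hone])
  -- columns j₀ and j₁ of A vanish
  have hcol0 : ∀ i, A i j₀ = 0 := by
    intro i
    rw [hA, LinearMap.toMatrix_apply, hBj₀]
    have : f v = 0 := by rw [hf, Matrix.toLin'_apply, hv]
    rw [this]
    simp
  have hcol1 : ∀ i, A i j₁ = 0 := by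
    intro i
    rw [hA, LinearMap.toMatrix_apply, hBj₁]
    have : f one = 0 := by rw [hf, Matrix.toLin'_apply, hL1]
    rw [this]
    simp
  -- X^2 divides charpoly A
  set N := Matrix.charmatrix A with hN
  have hcolN0 : (fun i => N i j₀) = (X : ℝ[X]) • (Pi.single j₀ 1 : ↥(hli.extend (Set.subset_univ (Set.range ![v, one]))) → ℝ[X]) := by
    funext i
    by_cases h : i = j₀
    · subst h
      rw [hN, Matrix.charmatrix_apply_eq, hcol0]
      simp
    · rw [hN, Matrix.charmatrix_apply_ne _ _ _ h, hcol0]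
      simp [Pi.single_eq_of_ne h]
  set N₁ := N.updateCol j₀ (Pi.single j₀ 1 : ↥(hli.extend (Set.subset_univ (Set.range ![v, one]))) → ℝ[X]) with hN₁
  have hdet1 : N.det = X * N₁.det := by
    have h1 : N = N.updateCol j₀ ((X : ℝ[X]) • (Pi.single j₀ 1 : ↥(hli.extend (Set.subset_univ (Set.range ![v, one]))) → ℝ[X])) := by
      rw [← hcolN0]
      exact (Matrix.updateCol_eq_self N j₀).symm
    conv_lhs => rw [h1]
    rw [Matrix.det_updateCol_smul]
  have hcolN₁1 : (fun i => N₁ i j₁) = (X : ℝ[X]) • (Pi.single j₁ 1 : ↥(hli.extend (Set.subset_univ (Set.range ![v, one]))) → ℝ[X]) := by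
    funext i
    rw [hN₁, Matrix.updateCol_apply]
    rw [if_neg (by intro h; exact hj01 (by rw [h]))]
    by_cases h : i = j₁
    · subst h
      rw [hN, Matrix.charmatrix_apply_eq, hcol1]
      simp
    · rw [hN, Matrix.charmatrix_apply_ne _ _ _ h, hcol1]
      simp [Pi.single_eq_of_ne h]
  have hdet2 : N₁.det = X * (N₁.updateCol j₁ (Pi.single j₁ 1 : ↥(hli.extend (Set.subset_univ (Set.range ![v, one]))) → ℝ[X])).det := by
    have h1 : N₁ = N₁.updateCol j₁ ((X : ℝ[X]) • (Pi.single j₁ 1 : ↥(hli.extend (Set.subset_univ (Set.range ![v, one]))) → ℝ[X])) := by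
      rw [← hcolN₁1]
      exact (Matrix.updateCol_eq_self N₁ j₁).symm
    conv_lhs => rw [h1]
    rw [Matrix.det_updateCol_smul]
  have hdvd : (X : ℝ[X]) ^ 2 ∣ A.charpoly := by
    rw [Matrix.charpoly, ← hN, hdet1, hdet2]
    exact ⟨(N₁.updateCol j₁ (Pi.single j₁ 1 : ↥(hli.extend (Set.subset_univ (Set.range ![v, one]))) → ℝ[X])).det, by ring⟩
  rw [hApoly] at hdvd
  -- contradiction with simplicity
  apply hq0
  have hpeq : L.charpoly.divX * X = L.charpoly := by
    have := Polynomial.divX_mul_X_add L.charpoly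
    rw [hp0, map_zero, add_zero] at this
    exact this
  obtain ⟨c, hc⟩ := hdvd
  have hqx : L.charpoly.divX = X * c := by
    have h2 : L.charpoly.divX * X = (X * c) * X := by
      rw [hpeq, hc]; ring
    exact mul_right_cancel₀ Polynomial.X_ne_zero h2
  rw [hqx, mul_comm]
  simp [Polynomial.coeff_mul_X]

lemma antitoneOn_Icc_of_hasDerivAt_interior {f g : ℝ → ℝ} {a b : ℝ}
    (hf : ∀ t ∈ Set.Icc a b, HasDerivAt f (g t) t)
    (hg : ∀ t ∈ Set.Ioo a b, g t ≤ 0) : AntitoneOn f (Set.Icc a b) := by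
  apply antitoneOn_of_deriv_nonpos (convex_Icc a b)
  · exact fun t ht => (hf t ht).continuousAt.continuousWithinAt
  · intro t ht
    rw [interior_Icc] at ht
    exact (hf t (Set.mem_Icc_of_Ioo ht)).differentiableAt.differentiableWithinAt
  · intro t ht
    rw [interior_Icc] at ht
    rw [(hf t (Set.mem_Icc_of_Ioo ht)).deriv]
    exact hg t ht

lemma scalar_upper (lam ε β c T : ℝ) (hβ : 0 < β) (hε : 0 < ε) (hc : 0 < c) (hT : 0 ≤ T)
    (α G : ℝ → ℝ)
    (hd : ∀ t : ℝ, 0 ≤ t → HasDerivAt α (-(1 / β) * G t) t)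
    (hH : ∀ t ≥ T, lam + ε ≤ α t → c ≤ G t) :
    ∃ N : ℝ, ∀ t ≥ N, α t ≤ lam + ε := by
  have step1 : ∃ T₁ ≥ T, α T₁ ≤ lam + ε := by
    by_contra hno
    push_neg at hno
    set T' := T + β * (α T - lam - ε + 1) / c with hT'
    have hαT : lam + ε < α T := hno T le_rfl
    have hTT' : T ≤ T' := by
      rw [hT']
      have h0 : 0 < β * (α T - lam - ε + 1) / c := by
        apply div_pos _ hc
        apply mul_pos hβ
        linarith
      linarith
    have hφ : AntitoneOn (fun t => α t + (c / β) * t) (Set.Icc T T') := by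
      apply antitoneOn_Icc_of_hasDerivAt_interior
        (g := fun t => -(1 / β) * G t + c / β)
      · intro t ht
        have hh := (hd t (le_trans hT ht.1)).add ((hasDerivAt_id t).const_mul (c / β))
        exact hh.congr_deriv (by ring)
      · intro t ht
        have h1 : c ≤ G t := hH t ht.1.le ((hno t ht.1.le).le)
        have h2 : -(1 / β) * G t + c / β = (c - G t) / β := by ring
        rw [h2]
        exact div_nonpos_of_nonpos_of_nonneg (by linarith) hβ.le
    have h3 := hφ (Set.left_mem_Icc.2 hTT') (Set.right_mem_Icc.2 hTT') hTT'
    have h4 : (c / β) * (T' - T) = α T - lam - ε + 1 := by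
      rw [hT']
      field_simp
      ring
    have h5 : α T' ≤ lam + ε - 1 := by
      have : α T' + (c / β) * T' ≤ α T + (c / β) * T := h3
      nlinarith [h4]
    have h6 := hno T' hTT'
    linarith
  obtain ⟨T₁, hT₁T, hT₁⟩ := step1
  refine ⟨T₁, fun t₂ ht₂ => ?_⟩
  by_contra hgt
  push_neg at hgt
  have hT₁0 : 0 ≤ T₁ := le_trans hT hT₁T
  have hcont : ContinuousOn α (Set.Icc T₁ t₂) := fun s hs =>
    (hd s (le_trans hT₁0 hs.1)).continuousAt.continuousWithinAt
  set S := Set.Icc T₁ t₂ ∩ α ⁻¹' (Set.Iic (lam + ε)) with hS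
  have hSclosed : IsClosed S :=
    hcont.preimage_isClosed_of_isClosed isClosed_Icc isClosed_Iic
  have hSne : S.Nonempty := ⟨T₁, ⟨Set.left_mem_Icc.2 ht₂, hT₁⟩⟩
  have hSbdd : BddAbove S := ⟨t₂, fun x hx => hx.1.2⟩
  set ts := sSup S with hts
  have htsS : ts ∈ S := hSclosed.csSup_mem hSne hSbdd
  have htsT₁ : T₁ ≤ ts := le_csSup hSbdd ⟨Set.left_mem_Icc.2 ht₂, hT₁⟩
  have hts2 : ts ≤ t₂ := htsS.1.2
  have hαts : α ts ≤ lam + ε := htsS.2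
  have hmid : ∀ s ∈ Set.Ioo ts t₂, lam + ε ≤ α s := by
    intro s hs
    by_contra hlt
    push_neg at hlt
    have hsS : s ∈ S := ⟨⟨le_trans htsT₁ hs.1.le, hs.2.le⟩, hlt.le⟩
    exact absurd (le_csSup hSbdd hsS) (not_le.2 hs.1)
  have hanti : AntitoneOn α (Set.Icc ts t₂) := by
    apply antitoneOn_Icc_of_hasDerivAt_interior (g := fun t => -(1 / β) * G t)
    · intro s hs
      exact hd s (le_trans (le_trans hT₁0 htsT₁) hs.1)
    · intro s hs
      have h1 : c ≤ G s := hH s (le_trans (le_trans hT₁T htsT₁) hs.1.le) (hmid s hs)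
      have h2 : -(1 / β) * G s ≤ 0 := by
        apply mul_nonpos_of_nonpos_of_nonneg
        · have : 0 < 1 / β := by positivity
          linarith
        · linarith
      exact h2
  have h7 := hanti (Set.left_mem_Icc.2 hts2) (Set.right_mem_Icc.2 hts2) hts2
  linarith

lemma scalar_conv (lam β : ℝ) (hβ : 0 < β) (α G : ℝ → ℝ)
    (hd : ∀ t : ℝ, 0 ≤ t → HasDerivAt α (-(1 / β) * G t) t)
    (H : ∀ ε > (0:ℝ), ∃ c > (0:ℝ), ∃ T ≥ (0:ℝ), ∀ t ≥ T,
        (lam + ε ≤ α t → c ≤ G t) ∧ (α t ≤ lam - ε → G t ≤ -c)) :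
    Tendsto α atTop (nhds lam) := by
  rw [Metric.tendsto_atTop]
  intro ε hε
  obtain ⟨c, hc, T, hT, hH⟩ := H (ε / 2) (by linarith)
  obtain ⟨N₁, hN₁⟩ := scalar_upper lam (ε / 2) β c T hβ (by linarith) hc hT α G hd
    (fun t ht h => (hH t ht).1 h)
  obtain ⟨N₂, hN₂⟩ := scalar_upper (-lam) (ε / 2) β c T hβ (by linarith) hc hT
    (fun t => -α t) (fun t => -G t)
    (fun t ht => by
      have h := (hd t ht).neg
      exact h.congr_deriv (by ring))
    (fun t ht h => by
      have h' : -lam + ε / 2 ≤ -α t := h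
      have h2 : α t ≤ lam - ε / 2 := by linarith
      have h3 := (hH t ht).2 h2
      show c ≤ -G t
      linarith)
  refine ⟨max N₁ N₂, fun t ht => ?_⟩
  have h1 := hN₁ t (le_trans (le_max_left _ _) ht)
  have h2 : -α t ≤ -lam + ε / 2 := hN₂ t (le_trans (le_max_right _ _) ht)
  rw [Real.dist_eq, abs_lt]
  constructor <;> linarith

lemma threshold {lo hi : EReal} {J' : ℝ → ℝ} {mu : ℝ} (hmu : 0 < mu)
    (hcont : ContinuousOn J' {x : ℝ | lo < (x : EReal) ∧ (x : EReal) < hi})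
    (hconv : ∀ x y : ℝ, lo < (x : EReal) → (x : EReal) < hi →
      lo < (y : EReal) → (y : EReal) < hi →
      mu * (x - y) ^ 2 ≤ (J' x - J' y) * (x - y))
    (ub lam : ℝ) (hub1 : lo < (ub : EReal)) (hub2 : (ub : EReal) < hi)
    (hJub : J' ub = lam) (ε : ℝ) (hε : 0 < ε) :
    ∃ δ > (0:ℝ), ∀ x : ℝ, lo < (x : EReal) → (x : EReal) < hi →
      (lam + ε ≤ J' x → ub + δ ≤ x) ∧ (J' x ≤ lam - ε → x ≤ ub - δ) := by
  set S := {x : ℝ | lo < (x : EReal) ∧ (x : EReal) < hi} with hS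
  have hopen : IsOpen S := by
    have : S = ((↑) : ℝ → EReal) ⁻¹' (Set.Ioo lo hi) := by
      ext x; simp [hS, Set.mem_Ioo]
    rw [this]
    exact (isOpen_Ioo).preimage continuous_coe_real_ereal
  have hmem : ub ∈ S := ⟨hub1, hub2⟩
  have hca : ContinuousAt J' ub := hcont.continuousAt (hopen.mem_nhds hmem)
  have htend : Tendsto J' (nhds ub) (nhds lam) := by
    have := hca.tendsto
    rwa [hJub] at this
  have hev1 : ∀ᶠ x in nhds ub, J' x < lam + ε := htend.eventually_lt_const (by linarith)
  have hev2 : ∀ᶠ x in nhds ub, lam - ε < J' x := htend.eventually_const_lt (by linarith)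
  have hev3 : ∀ᶠ x in nhds ub, x ∈ S := hopen.eventually_mem hmem
  have hcomb := (hev1.and hev2).and hev3
  rw [Metric.eventually_nhds_iff] at hcomb
  obtain ⟨r, hr, hball⟩ := hcomb
  refine ⟨r / 2, by linarith, fun x hx1 hx2 => ?_⟩
  have hxp : ((J' (ub + r/2) < lam + ε ∧ lam - ε < J' (ub + r/2)) ∧ (ub + r/2) ∈ S) := by
    apply hball
    rw [Real.dist_eq]
    rw [abs_of_pos (by linarith : (0:ℝ) < ub + r/2 - ub)]
    linarith
  have hxm : ((J' (ub - r/2) < lam + ε ∧ lam - ε < J' (ub - r/2)) ∧ (ub - r/2) ∈ S) := by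
    apply hball
    rw [Real.dist_eq]
    rw [abs_of_neg (by linarith : ub - r/2 - ub < 0)]
    linarith
  constructor
  · intro hJx
    by_contra hlt
    push_neg at hlt
    have hxne : x ≠ ub + r/2 := by
      intro h
      rw [h] at hJx
      linarith [hxp.1.1]
    have hcv := hconv x (ub + r/2) hx1 hx2 hxp.2.1 hxp.2.2
    have h0 : x - (ub + r/2) ≠ 0 := sub_ne_zero.2 hxne
    have hpos : 0 < mu * (x - (ub + r/2)) ^ 2 :=
      mul_pos hmu (lt_of_le_of_ne (sq_nonneg _) (Ne.symm (pow_ne_zero 2 h0)))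
    have hneg : (J' x - J' (ub + r/2)) * (x - (ub + r/2)) < 0 :=
      mul_neg_of_pos_of_neg (by linarith [hxp.1.1]) (by linarith)
    linarith
  · intro hJx
    by_contra hlt
    push_neg at hlt
    have hxne : x ≠ ub - r/2 := by
      intro h
      rw [h] at hJx
      linarith [hxm.1.2]
    have hcv := hconv x (ub - r/2) hx1 hx2 hxm.2.1 hxm.2.2
    have h0 : x - (ub - r/2) ≠ 0 := sub_ne_zero.2 hxne
    have hpos : 0 < mu * (x - (ub - r/2)) ^ 2 :=
      mul_pos hmu (lt_of_le_of_ne (sq_nonneg _) (Ne.symm (pow_ne_zero 2 h0)))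
    have hneg : (J' x - J' (ub - r/2)) * (x - (ub - r/2)) < 0 :=
      mul_neg_of_neg_of_pos (by linarith [hxm.1.2]) (by linarith)
    linarith

/-- Main convergence content of the paper's Theorem 1 (after time-scale separation): along
the reduced DAPI dynamics `η' = −(1/β)𝟙(Σᵢ uᵢ − d) − Lη`, `Jᵢ'(uᵢ) = ηᵢ`, the state `η`
converges to `η̄ = λ𝟙` and `u` converges to the unique minimizer `ū`. -/
theorem dapi_reduced_dynamics_global_attractivity
    (m : ℕ) (hm : 2 ≤ m)
    (lo hi : Fin m → EReal) (hlohi : ∀ i, lo i < hi i)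
    (J J' : Fin m → ℝ → ℝ) (μ : Fin m → ℝ) (hμ : ∀ i, 0 < μ i)
    (hderiv : ∀ i, ∀ x : ℝ, lo i < (x : EReal) → (x : EReal) < hi i →
      HasDerivAt (J i) (J' i x) x)
    (hJ'cont : ∀ i, ContinuousOn (J' i) {x : ℝ | lo i < (x : EReal) ∧ (x : EReal) < hi i})
    (hconv : ∀ i, ∀ x y : ℝ, lo i < (x : EReal) → (x : EReal) < hi i →
      lo i < (y : EReal) → (y : EReal) < hi i →
      μ i * (x - y) ^ 2 ≤ (J' i x - J' i y) * (x - y))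
    (hbarrier_lo : ∀ i, ∀ a : ℝ, lo i = (a : EReal) →
      Tendsto (J i) (nhdsWithin a (Set.Ioi a)) atTop)
    (hbarrier_hi : ∀ i, ∀ b : ℝ, hi i = (b : EReal) →
      Tendsto (J i) (nhdsWithin b (Set.Iio b)) atTop)
    (d : ℝ)
    (hfeas : ∃ u : Fin m → ℝ,
      (∀ i, lo i < (u i : EReal) ∧ (u i : EReal) < hi i) ∧ ∑ i, u i = d)
    (L : Matrix (Fin m) (Fin m) ℝ)
    (hL1 : L.mulVec (fun _ => (1 : ℝ)) = 0)
    (hsimple : ((L.map (Complex.ofReal)).charpoly).rootMultiplicity 0 = 1)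
    (hspec : ∀ z : ℂ, ((L.map (Complex.ofReal)).charpoly).IsRoot z → z ≠ 0 → 0 < z.re)
    (β : ℝ) (hβ : 0 < β)
    -- ū is the unique minimizer of the resource allocation problem
    (ubar : Fin m → ℝ)
    (hubar_mem : ∀ i, lo i < (ubar i : EReal) ∧ (ubar i : EReal) < hi i)
    (hubar_sum : ∑ i, ubar i = d)
    (hubar_min : ∀ v : Fin m → ℝ,
      ((∀ i, lo i < (v i : EReal) ∧ (v i : EReal) < hi i) ∧ ∑ i, v i = d) →
      ∑ i, J i (ubar i) ≤ ∑ i, J i (v i))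
    (hubar_unique : ∀ v : Fin m → ℝ,
      (((∀ i, lo i < (v i : EReal) ∧ (v i : EReal) < hi i) ∧ ∑ i, v i = d) ∧
        (∀ v' : Fin m → ℝ,
          ((∀ i, lo i < (v' i : EReal) ∧ (v' i : EReal) < hi i) ∧ ∑ i, v' i = d) →
          ∑ i, J i (v i) ≤ ∑ i, J i (v' i))) → v = ubar)
    -- λ is the common marginal cost at ū, and η̄ = λ𝟙
    (lam : ℝ) (hlam : ∀ i, J' i (ubar i) = lam)
    -- trajectories of the reduced DAPI dynamics
    (η : ℝ → (Fin m → ℝ)) (u : ℝ → (Fin m → ℝ))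
    (hu_mem : ∀ t : ℝ, 0 ≤ t → ∀ i, lo i < (u t i : EReal) ∧ (u t i : EReal) < hi i)
    (hu_eq : ∀ t : ℝ, 0 ≤ t → ∀ i, J' i (u t i) = η t i)
    (hη : ∀ t : ℝ, 0 ≤ t →
      HasDerivAt η (fun j => -(1 / β) * ((∑ i, u t i) - d) - L.mulVec (η t) j) t) :
    Tendsto η atTop (nhds (fun _ => lam)) ∧ Tendsto u atTop (nhds ubar) := by
  classical
  have hm0 : 0 < m := by omega
  haveI : Nonempty (Fin m) := ⟨⟨0, hm0⟩⟩
  set onevec : Fin m → ℝ := fun _ => (1 : ℝ) with honevec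
  set G : ℝ → ℝ := fun t => (∑ i, u t i) - d with hGdef
  -- Lη → 0
  have hz0 : Tendsto (fun t => L.mulVec (η t)) atTop (nhds 0) :=
    Lη_tendsto_zero L hL1 hsimple hspec
      (fun t => -(1 / β) * ((∑ i, u t i) - d)) η hη
  -- charpoly structure
  obtain ⟨hp0, hq0⟩ := charpoly_coeff_facts L hsimple
  set q := L.charpoly.divX with hqdef
  set q0 := q.coeff 0 with hq0def
  have hq0ne : q0 ≠ 0 := hq0
  have hpeq : q * X = L.charpoly := by
    have h := Polynomial.divX_mul_X_add L.charpoly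
    rw [hp0, map_zero, add_zero] at h
    exact h
  set A := (Polynomial.aeval L) q with hAdef
  have hAL : A * L = 0 := by
    have h1 : A * L = (Polynomial.aeval L) (q * X) := by
      rw [hAdef, _root_.map_mul, Polynomial.aeval_X]
    rw [h1, hpeq, Matrix.aeval_self_charpoly]
  have hLA : L * A = 0 := by
    have h1 : L * A = (Polynomial.aeval L) (X * q) := by
      rw [hAdef, _root_.map_mul, Polynomial.aeval_X]
    rw [h1, mul_comm X q, hpeq, Matrix.aeval_self_charpoly]
  have hAsplit : A = (Polynomial.aeval L) q.divX * L + q0 • 1 := by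
    rw [hAdef]
    conv_lhs => rw [(Polynomial.divX_mul_X_add q).symm]
    rw [_root_.map_add, _root_.map_mul, Polynomial.aeval_X, Polynomial.aeval_C]
    congr 1
    exact Algebra.algebraMap_eq_smul_one q0
  have hAone : A.mulVec onevec = q0 • onevec := by
    rw [hAsplit, Matrix.add_mulVec, ← Matrix.mulVec_mulVec, hL1, Matrix.mulVec_zero,
      Matrix.smul_mulVec, Matrix.one_mulVec]
    simp
  -- the consensus component
  set s : ℝ → Fin m → ℝ := fun t => (1 / q0) • (A.mulVec (η t)) with hsdef
  have hsker : ∀ t, L.mulVec (s t) = 0 := by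
    intro t
    rw [hsdef]
    show L.mulVec ((1 / q0) • (A.mulVec (η t))) = 0
    rw [Matrix.mulVec_smul, Matrix.mulVec_mulVec, hLA, Matrix.zero_mulVec, smul_zero]
  set i0 : Fin m := ⟨0, hm0⟩ with hi0
  set α : ℝ → ℝ := fun t => s t i0 with hαdef
  have hsα : ∀ t, s t = fun _ => α t := by
    intro t
    obtain ⟨c, hc⟩ := ker_L_one hm0 L hL1 hp0 hq0 (s t) (hsker t)
    have hca : α t = c := by rw [hαdef]; show s t i0 = c; rw [hc]
    rw [hc, hca]
  -- derivative of α
  set Φ := ((Matrix.mulVecLin A).toContinuousLinearMap) with hΦdef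
  have hαd : ∀ t : ℝ, 0 ≤ t → HasDerivAt α (-(1 / β) * G t) t := by
    intro t ht
    have h1 := (Φ.hasFDerivAt (x := η t)).comp_hasDerivAt t (hη t ht)
    have h2 := hasDerivAt_pi.1 h1 i0
    have h3 := h2.const_mul (1 / q0)
    have hfun : (fun s' => (1 / q0) * (⇑Φ ∘ η) s' i0) = α := by
      funext s'
      rw [hαdef]
      show (1 / q0) * (A.mulVec (η s')) i0 = s s' i0
      rw [hsdef]
      simp
    have hval : (1 / q0) * (Φ (fun j => -(1 / β) * ((∑ i, u t i) - d) - L.mulVec (η t) j)) i0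
        = -(1 / β) * G t := by
      have hx : (fun j => -(1 / β) * ((∑ i, u t i) - d) - L.mulVec (η t) j)
          = (-(1 / β) * G t) • onevec - L.mulVec (η t) := by
        funext j
        simp [hGdef, honevec]
      show (1 / q0) * (A.mulVec (fun j => -(1 / β) * ((∑ i, u t i) - d) - L.mulVec (η t) j)) i0
          = -(1 / β) * G t
      rw [hx, Matrix.mulVec_sub, Matrix.mulVec_smul, hAone,
        Matrix.mulVec_mulVec, hAL, Matrix.zero_mulVec]
      show (1 / q0) * ((-(1 / β) * G t) • (q0 • onevec) i0 - 0) = -(1 / β) * G t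
      show (1 / q0) * ((-(1 / β) * G t) * (q0 * 1) - 0) = -(1 / β) * G t
      field_simp
      ring
    rw [hfun] at h3
    rw [hval] at h3
    exact h3
  -- the deviation e
  set ebar : ℝ → Fin m → ℝ := fun t => fun i => η t i - α t with hedef
  have heform : ∀ t, ebar t =
      (-(1 / q0)) • (((Polynomial.aeval L) q.divX).mulVec (L.mulVec (η t))) := by
    intro t
    have h4 : A.mulVec (η t) =
        ((Polynomial.aeval L) q.divX).mulVec (L.mulVec (η t)) + q0 • η t := by
      conv_lhs => rw [hAsplit]
      rw [Matrix.add_mulVec, ← Matrix.mulVec_mulVec, Matrix.smul_mulVec,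
        Matrix.one_mulVec]
    funext i
    have h5 : s t i = α t := by rw [hsα t]
    have h6 : s t i = (1 / q0) * ((((Polynomial.aeval L) q.divX).mulVec (L.mulVec (η t))) i
        + q0 * η t i) := by
      show ((1 / q0) • (A.mulVec (η t))) i = _
      rw [h4]
      show (1 / q0) * ((((Polynomial.aeval L) q.divX).mulVec (L.mulVec (η t))) i
        + q0 * η t i) = _
      rfl
    show η t i - α t = (-(1 / q0)) * ((((Polynomial.aeval L) q.divX).mulVec (L.mulVec (η t))) i)
    rw [← h5, h6]
    field_simp
    ring
  have he0 : Tendsto ebar atTop (nhds 0) := by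
    set Ψ := ((Matrix.mulVecLin ((Polynomial.aeval L) q.divX)).toContinuousLinearMap) with hΨdef
    have heq : ebar = fun t => (-(1 / q0)) • Ψ (L.mulVec (η t)) := by
      funext t
      rw [heform t]
      rfl
    rw [heq]
    have h7 := (Ψ.continuous.tendsto 0).comp hz0
    rw [map_zero] at h7
    have h8 := h7.const_smul (-(1 / q0))
    simpa using h8
  -- monotonicity bound
  have hμbound : ∀ t : ℝ, 0 ≤ t → ∀ i,
      μ i * (u t i - ubar i) ^ 2 ≤ (η t i - lam) * (u t i - ubar i) := by
    intro t ht i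
    have h9 := hconv i (u t i) (ubar i) (hu_mem t ht i).1 (hu_mem t ht i).2
      (hubar_mem i).1 (hubar_mem i).2
    rwa [hu_eq t ht i, hlam i] at h9
  have hGsum : ∀ t, G t = ∑ i, (u t i - ubar i) := by
    intro t
    rw [hGdef]
    show (∑ i, u t i) - d = _
    rw [← hubar_sum, Finset.sum_sub_distrib]
  -- the sign/threshold hypothesis for the scalar dynamics
  have hH : ∀ ε > (0:ℝ), ∃ c > (0:ℝ), ∃ T ≥ (0:ℝ), ∀ t ≥ T,
      (lam + ε ≤ α t → c ≤ G t) ∧ (α t ≤ lam - ε → G t ≤ -c) := by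
    intro ε hε
    have hδ : ∀ i : Fin m, ∃ δ > (0:ℝ), ∀ x : ℝ, lo i < (x : EReal) → (x : EReal) < hi i →
        (lam + ε/2 ≤ J' i x → ubar i + δ ≤ x) ∧ (J' i x ≤ lam - ε/2 → x ≤ ubar i - δ) :=
      fun i => threshold (hμ i) (hJ'cont i) (hconv i) (ubar i) lam
        (hubar_mem i).1 (hubar_mem i).2 (hlam i) (ε/2) (by linarith)
    choose δ hδpos hδspec using hδ
    set c := ∑ i, δ i with hcdef
    have hcpos : 0 < c := Finset.sum_pos (fun i _ => hδpos i) Finset.univ_nonempty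
    have hev : ∀ᶠ t in atTop, ∀ i, |ebar t i| ≤ ε/2 := by
      rw [eventually_all]
      intro i
      have h10 := tendsto_pi_nhds.1 he0 i
      have h11 : Tendsto (fun t => |ebar t i|) atTop (nhds 0) := by
        have := (continuous_abs.tendsto 0).comp h10
        simpa [Function.comp_def] using this
      filter_upwards [h11.eventually_lt_const (by linarith : (0:ℝ) < ε/2)] with t ht
      exact ht.le
    rw [eventually_atTop] at hev
    obtain ⟨T₀, hT₀⟩ := hev
    refine ⟨c, hcpos, max T₀ 0, le_max_right _ _, fun t ht => ?_⟩
    have ht0 : (0:ℝ) ≤ t := le_trans (le_max_right _ _) ht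
    have hTt := hT₀ t (le_trans (le_max_left _ _) ht)
    have hηi : ∀ i, η t i = α t + ebar t i := by
      intro i
      show η t i = α t + (η t i - α t)
      ring
    constructor
    · intro hαt
      have hub : ∀ i, ubar i + δ i ≤ u t i := by
        intro i
        apply (hδspec i (u t i) (hu_mem t ht0 i).1 (hu_mem t ht0 i).2).1
        rw [hu_eq t ht0 i, hηi i]
        have h12 := (abs_le.1 (hTt i)).1
        linarith
      rw [hGsum]
      calc c = ∑ i, δ i := rfl
      _ ≤ ∑ i, (u t i - ubar i) := Finset.sum_le_sum (fun i _ => by linarith [hub i])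
    · intro hαt
      have hub : ∀ i, u t i ≤ ubar i - δ i := by
        intro i
        apply (hδspec i (u t i) (hu_mem t ht0 i).1 (hu_mem t ht0 i).2).2
        rw [hu_eq t ht0 i, hηi i]
        have h12 := (abs_le.1 (hTt i)).2
        linarith
      rw [hGsum]
      have h13 : ∑ i, (u t i - ubar i) ≤ ∑ i, (-δ i) :=
        Finset.sum_le_sum (fun i _ => by linarith [hub i])
      rw [Finset.sum_neg_distrib] at h13
      linarith
  -- α converges
  have hα : Tendsto α atTop (nhds lam) := scalar_conv lam β hβ α G hαd hH
  -- η converges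
  have hηconv : Tendsto η atTop (nhds (fun _ => lam)) := by
    rw [tendsto_pi_nhds]
    intro i
    have h14 := tendsto_pi_nhds.1 he0 i
    have h15 : Tendsto (fun t => α t + ebar t i) atTop (nhds lam) := by
      have := hα.add h14
      simpa using this
    have heq2 : (fun t => η t i) = fun t => α t + ebar t i := by
      funext t
      show η t i = α t + (η t i - α t)
      ring
    rw [heq2]
    exact h15
  refine ⟨hηconv, ?_⟩
  -- u converges
  rw [tendsto_pi_nhds]
  intro i
  have hηi := tendsto_pi_nhds.1 hηconv i
  rw [← tendsto_sub_nhds_zero_iff]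
  apply squeeze_zero_norm' (a := fun t => (1 / μ i) * |η t i - lam|)
  · filter_upwards [eventually_ge_atTop (0:ℝ)] with t ht
    have hb := hμbound t ht i
    show ‖u t i - ubar i‖ ≤ (1 / μ i) * |η t i - lam|
    rw [Real.norm_eq_abs]
    rcases eq_or_ne (u t i) (ubar i) with h | h
    · rw [h]
      simp
      exact mul_nonneg (inv_nonneg.2 (hμ i).le) (abs_nonneg _)
    · have hne : u t i - ubar i ≠ 0 := sub_ne_zero.2 h
      have habs : μ i * |u t i - ubar i| ≤ |η t i - lam| := by
        have h16 : μ i * |u t i - ubar i| ^ 2 ≤ |η t i - lam| * |u t i - ubar i| := by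
          calc μ i * |u t i - ubar i| ^ 2 = μ i * (u t i - ubar i) ^ 2 := by rw [sq_abs]
          _ ≤ (η t i - lam) * (u t i - ubar i) := hb
          _ ≤ |(η t i - lam) * (u t i - ubar i)| := le_abs_self _
          _ = |η t i - lam| * |u t i - ubar i| := abs_mul _ _
        have h17 : 0 < |u t i - ubar i| := abs_pos.2 hne
        nlinarith [h16, h17]
      calc |u t i - ubar i| = (1 / μ i) * (μ i * |u t i - ubar i|) := by
            rw [one_div, ← mul_assoc, inv_mul_cancel₀ (ne_of_gt (hμ i)), one_mul]
      _ ≤ (1 / μ i) * |η t i - lam| :=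
            mul_le_mul_of_nonneg_left habs (one_div_pos.2 (hμ i)).le
  · have h18 := hηi.sub_const lam
    rw [sub_self] at h18
    have h19 : Tendsto (fun t => |η t i - lam|) atTop (nhds 0) := by
      have := (continuous_abs.tendsto 0).comp h18
      simpa [Function.comp_def] using this
    have h20 := h19.const_mul (1 / μ i)
    rw [mul_zero] at h20
    exact h20
end
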